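/- arXiv:1006.2808 — 4 statements merged into one kernel-verified Lean document; each statement's English description precedes it below -/
import Mathlib

section
/- Let Λ be a positive differentiable function on [b₀,∞) with derivative λ satisfying λ(x)/Λ(x) ≤ β₀/x for β₀ ∈ (0,1), and fix a constant a* > 0. Set α = (1−β₀)/2. Then there exists b₁ ≥ b₀ such that for all x > b₁, Λ(x) − Λ(x − x^α) ≤ a*. Equivalently, x − Λ^{-1}(Λ(x) − a*) ≥ x^{(1−β₀)/2} for all sufficiently large x. -/
open Real Filter

/-- Overshoot lemma: under Assumption B2, for `α = (1-β₀)/2`, eventually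
`Λ x - Λ (x - x^α) ≤ a*`, i.e. `x - Λ⁻¹(Λ x - a*) ≥ x^{(1-β₀)/2}`. -/
theorem stmt2 (b₀ β₀ astar : ℝ) (hb₀ : 0 < b₀) (hβ₀ : β₀ ∈ Set.Ioo (0:ℝ) 1)
    (hastar : 0 < astar)
    (Λ lam : ℝ → ℝ) (hΛpos : ∀ x ≥ b₀, 0 < Λ x)
    (hmono : StrictMonoOn Λ (Set.Ici b₀))
    (hderiv : ∀ x ≥ b₀, HasDerivAt Λ (lam x) x)
    (hB2 : ∀ x ≥ b₀, lam x / Λ x ≤ β₀ / x) :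
    ∃ b₁ ≥ b₀, ∀ x > b₁, Λ x - Λ (x - x ^ ((1 - β₀) / 2)) ≤ astar := by
  obtain ⟨hβ0, hβ1⟩ := hβ₀
  set α : ℝ := (1 - β₀) / 2 with hαdef
  have hαpos : 0 < α := by simp only [hαdef]; linarith
  have hΛb₀ : 0 < Λ b₀ := hΛpos b₀ le_rfl
  -- Step 1: growth bound Λ x ≤ (Λ b₀ / b₀^β₀) x^β₀
  have key : ∀ x ≥ b₀, Λ x ≤ Λ b₀ / b₀ ^ β₀ * x ^ β₀ := by
    have hg : AntitoneOn (fun y => Real.log (Λ y) - β₀ * Real.log y) (Set.Ici b₀) := by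
      have hd : ∀ y ∈ Set.Ici b₀, HasDerivAt (fun y => Real.log (Λ y) - β₀ * Real.log y)
          (lam y / Λ y - β₀ / y) y := by
        intro y hy
        have hy0 : (0:ℝ) < y := lt_of_lt_of_le hb₀ hy
        have h1 : HasDerivAt (fun y => Real.log (Λ y)) (lam y / Λ y) y :=
          (hderiv y hy).log (ne_of_gt (hΛpos y hy))
        have h2 : HasDerivAt (fun y => β₀ * Real.log y) (β₀ * y⁻¹) y :=
          (Real.hasDerivAt_log (ne_of_gt hy0)).const_mul β₀
        have := h1.sub h2
        simpa [div_eq_mul_inv, Pi.sub_def] using this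
      apply antitoneOn_of_deriv_nonpos (convex_Ici b₀)
      · exact fun y hy => ((hd y hy).continuousAt).continuousWithinAt
      · intro y hy
        rw [interior_Ici] at hy
        exact ((hd y (Set.mem_Ici.2 (le_of_lt hy))).differentiableAt).differentiableWithinAt
      · intro y hy
        rw [interior_Ici] at hy
        rw [(hd y (Set.mem_Ici.2 (le_of_lt hy))).deriv]
        have := hB2 y (le_of_lt hy)
        linarith
    intro x hx
    have hx0 : (0:ℝ) < x := lt_of_lt_of_le hb₀ hx
    have hgx := hg Set.self_mem_Ici hx hx
    simp only at hgx
    have hRpos : 0 < Λ b₀ / b₀ ^ β₀ * x ^ β₀ := by positivity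
    rw [← Real.log_le_log_iff (hΛpos x hx) hRpos]
    rw [Real.log_mul (ne_of_gt (by positivity)) (ne_of_gt (by positivity)),
      Real.log_div (ne_of_gt hΛb₀) (ne_of_gt (by positivity)),
      Real.log_rpow hb₀, Real.log_rpow hx0]
    linarith
  -- Step 2: eventual bounds
  set K : ℝ := Λ b₀ / b₀ ^ β₀ with hKdef
  have hK : 0 < K := by positivity
  set e : ℝ := β₀ + α - 1 with hedef
  have he : e < 0 := by simp only [hedef, hαdef]; linarith
  have E1 : ∀ᶠ x : ℝ in atTop, x ^ α ≤ x / 2 := by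
    have h := tendsto_rpow_neg_atTop (by linarith : (0:ℝ) < 1 - α)
    have h2 := h.eventually_le_const (by norm_num : (0:ℝ) < 1/2)
    filter_upwards [h2, eventually_gt_atTop (0:ℝ)] with x hx hx0
    have : x ^ α = x ^ (-(1 - α)) * x := by
      rw [← Real.rpow_add_one (ne_of_gt hx0)]; ring_nf
    rw [this]
    calc x ^ (-(1 - α)) * x ≤ (1/2) * x := by
          apply mul_le_mul_of_nonneg_right hx (le_of_lt hx0)
      _ = x / 2 := by ring
  have E2 : ∀ᶠ x : ℝ in atTop, 2 * β₀ * K * x ^ e ≤ astar := by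
    have h : Tendsto (fun x : ℝ => 2 * β₀ * K * x ^ e) atTop (nhds (2 * β₀ * K * 0)) := by
      exact (tendsto_rpow_neg_atTop (by linarith : (0:ℝ) < -e)).const_mul _ |>.congr
        (fun x => by rw [neg_neg])
    rw [mul_zero] at h
    exact h.eventually_le_const hastar
  have E3 : ∀ᶠ x : ℝ in atTop, x ≥ 2 * b₀ := eventually_ge_atTop _
  obtain ⟨b₁, hb₁⟩ := (E1.and (E2.and E3)).exists_forall_of_atTop
  refine ⟨max b₁ b₀, le_max_right _ _, ?_⟩
  intro x hx
  obtain ⟨hE1, hE2, hE3⟩ := hb₁ x (le_of_lt (lt_of_le_of_lt (le_max_left _ _) hx))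
  have hxb₀ : b₀ ≤ x := le_of_lt (lt_of_le_of_lt (le_max_right _ _) hx)
  have hx0 : (0:ℝ) < x := lt_of_lt_of_le hb₀ hxb₀
  set h : ℝ := x ^ α with hhdef
  have hh0 : 0 < h := Real.rpow_pos_of_pos hx0 _
  have hxh : x - h ≥ x / 2 := by linarith
  have hxhb₀ : b₀ ≤ x - h := by linarith
  have hlt : x - h < x := by linarith
  -- MVT
  have hcont : ContinuousOn Λ (Set.Icc (x - h) x) := fun y hy =>
    ((hderiv y (le_trans hxhb₀ hy.1)).continuousAt).continuousWithinAt
  have hdiff : ∀ y ∈ Set.Ioo (x - h) x, HasDerivAt Λ (lam y) y := fun y hy =>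
    hderiv y (le_trans hxhb₀ (le_of_lt hy.1))
  obtain ⟨c, hc, hc'⟩ := exists_hasDerivAt_eq_slope Λ lam hlt hcont hdiff
  have hcb₀ : b₀ ≤ c := le_trans hxhb₀ (le_of_lt hc.1)
  have hc0 : (0:ℝ) < c := lt_of_lt_of_le hb₀ hcb₀
  have hΛc : 0 < Λ c := hΛpos c hcb₀
  have hdiffeq : Λ x - Λ (x - h) = lam c * h := by
    have : x - (x - h) = h := by ring
    rw [this] at hc'
    field_simp at hc'
    linarith
  rw [hdiffeq]
  -- bound lam c
  have hlamc : lam c ≤ β₀ * Λ c / c := by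
    have := hB2 c hcb₀
    rw [div_le_div_iff₀ hΛc hc0] at this
    rw [le_div_iff₀ hc0]
    linarith [this]
  have hΛcx : Λ c ≤ Λ x := le_of_lt (hmono (Set.mem_Ici.2 hcb₀) (Set.mem_Ici.2 hxb₀) hc.2)
  have hΛxK : Λ x ≤ K * x ^ β₀ := key x hxb₀
  have hinvc : 1 / c ≤ 2 / x := by
    rw [div_le_div_iff₀ hc0 hx0]
    have : x / 2 ≤ c := le_trans hxh (le_of_lt hc.1)
    linarith
  have step1 : lam c ≤ β₀ * Λ x * (2 / x) := by
    calc lam c ≤ β₀ * Λ c / c := hlamc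
      _ = β₀ * Λ c * (1 / c) := by ring
      _ ≤ β₀ * Λ x * (1 / c) := by
          apply mul_le_mul_of_nonneg_right _ (by positivity)
          exact mul_le_mul_of_nonneg_left hΛcx (le_of_lt hβ0)
      _ ≤ β₀ * Λ x * (2 / x) := by
          apply mul_le_mul_of_nonneg_left hinvc
          exact mul_nonneg (le_of_lt hβ0) (le_of_lt (hΛpos x hxb₀))
  have hrpow : x ^ β₀ * h / x = x ^ e := by
    rw [hhdef, hedef, ← Real.rpow_add hx0]
    rw [eq_comm, ← Real.rpow_sub_one (ne_of_gt hx0)]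
  calc lam c * h ≤ β₀ * Λ x * (2 / x) * h := mul_le_mul_of_nonneg_right step1 (le_of_lt hh0)
    _ ≤ β₀ * (K * x ^ β₀) * (2 / x) * h := by
        apply mul_le_mul_of_nonneg_right _ (le_of_lt hh0)
        apply mul_le_mul_of_nonneg_right _ (by positivity)
        exact mul_le_mul_of_nonneg_left hΛxK (le_of_lt hβ0)
    _ = 2 * β₀ * K * (x ^ β₀ * h / x) := by ring
    _ = 2 * β₀ * K * x ^ e := by rw [hrpow]
    _ ≤ astar := hE2
end

section
/- Let X be a random variable with finite negative mean μ < 0, a subexponential (heavy) tail, and let S_n be the associated random walk with S₀ = 0 and τ_b = inf{n ≥ 1 : S_n > b}. If X is regularly varying with tail index ι ∈ (1,2), then E[τ_b | τ_b < ∞] = ∞, i.e. the conditional expected first passage time given ruin is infinite. -/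
open MeasureTheory ProbabilityTheory Filter
open scoped ENNReal

/-- Divergence of `∑ (m+1) f(d + c m)` for `f` regularly varying of index `-ι`, `ι < 2`. -/
lemma stmt8_div (f : ℝ → ℝ) (hanti : Antitone f) (hfpos : ∀ x, 0 < f x)
    (ι : ℝ) (hι1 : 1 < ι) (hι2 : ι < 2)
    (hRV : ∀ t > 0, Tendsto (fun x => f (t * x) / f x) atTop (nhds (t ^ (-ι))))
    (c d : ℝ) (hc : 0 < c) (hd : 0 ≤ d) :
    ∑' m : ℕ, ((m : ℝ≥0∞) + 1) * ENNReal.ofReal (f (d + c * m)) = ⊤ := by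
  set t : ℕ → ℝ≥0∞ := fun m => ((m : ℝ≥0∞) + 1) * ENNReal.ofReal (f (d + c * m)) with ht
  have hι0 : (0:ℝ) < ι := by linarith
  -- choice of η
  set η : ℝ := (4:ℝ) ^ (1/ι) - 2 with hη
  have h42 : (2:ℝ) < (4:ℝ) ^ (1/ι) := by
    have h4 : ((4:ℝ) ^ ((1:ℝ)/2)) = 2 := by
      rw [show (4:ℝ) = 2^(2:ℕ) by norm_num, ← Real.rpow_natCast 2 2, ← Real.rpow_mul (by norm_num)]
      norm_num
    calc (2:ℝ) = (4:ℝ) ^ ((1:ℝ)/2) := h4.symm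
      _ < (4:ℝ) ^ (1/ι) := by
          apply Real.rpow_lt_rpow_left_iff (x := (4:ℝ)) (by norm_num) |>.2
          rw [div_lt_div_iff₀ (by norm_num) hι0]
          linarith
  have hηpos : 0 < η := by simp only [hη]; linarith
  -- key numeric inequality : ((4+η)/2)^ι < 4
  have hkey : ((4+η)/2) ^ ι < 4 := by
    have hb2 : (4+η)/2 < (4:ℝ)^(1/ι) := by
      simp only [hη]; rw [div_lt_iff₀ (by norm_num : (0:ℝ) < 2)]
      nlinarith
    have hb0 : (0:ℝ) ≤ (4+η)/2 := by nlinarith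
    calc ((4+η)/2) ^ ι < ((4:ℝ)^(1/ι)) ^ ι := Real.rpow_lt_rpow hb0 hb2 hι0
      _ = 4 := by
          rw [← Real.rpow_mul (by norm_num), one_div, inv_mul_cancel₀ (ne_of_gt hι0),
            Real.rpow_one]
  have hgap : (2:ℝ) ^ (-ι) < 4 * (4+η) ^ (-ι) := by
    have h2pos : (0:ℝ) < (2:ℝ) ^ ι := Real.rpow_pos_of_pos (by norm_num) ι
    have h4pos : (0:ℝ) < (4+η:ℝ) ^ ι := Real.rpow_pos_of_pos (by linarith) ι
    have hdiv : ((4+η)/2) ^ ι = (4+η)^ι / 2^ι := Real.div_rpow (by linarith) (by norm_num) ι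
    rw [Real.rpow_neg (by norm_num : (0:ℝ) ≤ 2), Real.rpow_neg (by linarith : (0:ℝ) ≤ 4+η)]
    rw [hdiv, div_lt_iff₀ h2pos] at hkey
    have hi2 : (2:ℝ)^ι * ((2:ℝ)^ι)⁻¹ = 1 := mul_inv_cancel₀ (ne_of_gt h2pos)
    have hi4 : ((4+η):ℝ)^ι * (((4+η):ℝ)^ι)⁻¹ = 1 := mul_inv_cancel₀ (ne_of_gt h4pos)
    nlinarith [mul_pos (inv_pos.2 h2pos) (inv_pos.2 h4pos), hkey,
      mul_pos h2pos h4pos, inv_pos.2 h2pos, inv_pos.2 h4pos]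
  -- the sequence x k = c * 2^k
  set x : ℕ → ℝ := fun k => c * 2 ^ k with hx
  have hxpos : ∀ k, 0 < x k := fun k => mul_pos hc (by positivity)
  have hxt : Tendsto x atTop atTop := by
    apply Tendsto.const_mul_atTop hc
    exact tendsto_pow_atTop_atTop_of_one_lt (by norm_num)
  -- eventual inequalities
  have h1 : Tendsto (fun k => f ((4+η) * x k) / f (x k)) atTop (nhds ((4+η) ^ (-ι))) :=
    (hRV (4+η) (by linarith)).comp hxt
  have h2 : Tendsto (fun k => f (2 * x k) / f (x k)) atTop (nhds ((2:ℝ) ^ (-ι))) :=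
    (hRV 2 (by norm_num)).comp hxt
  have h3 : ∀ᶠ k in atTop, f (2 * x k) / f (x k) < 4 * (f ((4+η) * x k) / f (x k)) := by
    have := (h1.const_mul 4).sub h2
    have hpos0 : (0:ℝ) < 4 * (4+η)^(-ι) - 2^(-ι) := by linarith
    filter_upwards [this.eventually (eventually_gt_nhds hpos0)] with k hk
    linarith
  have h4 : ∀ᶠ k in atTop, d ≤ η * x k := by
    filter_upwards [hxt.eventually_ge_atTop (d / η)] with k hk
    calc d = η * (d/η) := by field_simp
      _ ≤ η * x k := by apply mul_le_mul_of_nonneg_left hk (le_of_lt hηpos)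
  obtain ⟨k0, hk0⟩ := (h3.and h4).exists_forall_of_atTop
  -- the dyadic sequence a k
  set a : ℕ → ℝ := fun k => 4 ^ k * f (d + 2 * c * 2 ^ k) with ha
  have hapos : ∀ k, 0 < a k := fun k => mul_pos (by positivity) (hfpos _)
  have hstep : ∀ k, k0 ≤ k → a k ≤ a (k + 1) := by
    intro k _
    obtain ⟨hk1, hk2⟩ := hk0 k (by omega)
    simp only [hx] at hk2
    have e1 : d + 2 * c * 2 ^ (k+1) ≤ (4+η) * x k := by
      simp only [hx]; rw [pow_succ]; nlinarith [hxpos k]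
    have e2 : 2 * x k ≤ d + 2 * c * 2 ^ k := by
      simp only [hx]; nlinarith
    have i1 : f ((4+η) * x k) ≤ f (d + 2 * c * 2 ^ (k+1)) := hanti e1
    have i2 : f (d + 2 * c * 2 ^ k) ≤ f (2 * x k) := hanti e2
    have i3 : f (2 * x k) < 4 * f ((4+η) * x k) := by
      have hC := hfpos (x k)
      rw [div_lt_iff₀ hC] at hk1
      have : 4 * (f ((4+η) * x k) / f (x k)) * f (x k) = 4 * f ((4+η) * x k) := by
        field_simp
      linarith [hk1, this]
    have : f (d + 2 * c * 2 ^ k) ≤ 4 * f (d + 2 * c * 2 ^ (k+1)) := by linarith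
    simp only [ha]
    calc 4^k * f (d + 2*c*2^k) ≤ 4^k * (4 * f (d + 2*c*2^(k+1))) := by
          apply mul_le_mul_of_nonneg_left this (by positivity)
      _ = 4^(k+1) * f (d + 2*c*2^(k+1)) := by ring
  have hmono : ∀ k, k0 ≤ k → a k0 ≤ a k := by
    intro k hk
    induction k, hk using Nat.le_induction with
    | base => exact le_refl _
    | succ n hn ih => exact le_trans ih (hstep n hn)
  -- block sums
  set blk : ℕ → ℝ≥0∞ := fun k => ∑ m ∈ Finset.Ico (2^k) (2^(k+1)), t m with hblk
  have hblk_ge : ∀ k, ENNReal.ofReal (a k) ≤ blk k := by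
    intro k
    have hterm : ∀ m ∈ Finset.Ico (2^k) (2^(k+1)),
        ((2:ℝ≥0∞)^k) * ENNReal.ofReal (f (d + 2 * c * 2 ^ k)) ≤ t m := by
      intro m hm
      rw [Finset.mem_Ico] at hm
      apply mul_le_mul'
      · calc ((2:ℝ≥0∞)^k) = ((2^k : ℕ) : ℝ≥0∞) := by push_cast; ring
          _ ≤ (m : ℝ≥0∞) := by exact_mod_cast Nat.cast_le.2 hm.1
          _ ≤ (m : ℝ≥0∞) + 1 := le_self_add
      · apply ENNReal.ofReal_le_ofReal
        apply hanti
        have : (m:ℝ) ≤ 2^(k+1) := by exact_mod_cast le_of_lt hm.2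
        have h2 : (2:ℝ)^(k+1) = 2 * 2^k := by ring
        nlinarith
    calc ENNReal.ofReal (a k)
        = ((2^k : ℕ) : ℝ≥0∞) * (((2:ℝ≥0∞)^k) * ENNReal.ofReal (f (d + 2*c*2^k))) := by
          simp only [ha]
          rw [show (4:ℝ)^k = (2:ℝ)^k * (2:ℝ)^k by rw [← mul_pow]; norm_num, mul_assoc,
            ENNReal.ofReal_mul (by positivity), ENNReal.ofReal_mul (by positivity)]
          congr 1
          · push_cast
            rw [ENNReal.ofReal_pow (by norm_num : (0:ℝ) ≤ 2)]
            norm_num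
          · congr 1
            rw [ENNReal.ofReal_pow (by norm_num : (0:ℝ) ≤ 2)]
            norm_num
      _ = ∑ _m ∈ Finset.Ico (2^k) (2^(k+1)), (((2:ℝ≥0∞)^k) * ENNReal.ofReal (f (d + 2*c*2^k))) := by
          rw [Finset.sum_const, Nat.card_Ico]
          rw [show 2^(k+1) - 2^k = 2^k by rw [pow_succ]; omega]
          rw [nsmul_eq_mul]
      _ ≤ blk k := Finset.sum_le_sum hterm
  have hpart : ∀ n, ∑ k ∈ Finset.range n, blk k ≤ ∑ m ∈ Finset.range (2^n), t m := by
    intro n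
    induction n with
    | zero => simp
    | succ n ih =>
      rw [Finset.sum_range_succ]
      have : ∑ m ∈ Finset.range (2^(n+1)), t m
          = ∑ m ∈ Finset.range (2^n), t m + blk n := by
        simp only [hblk, Finset.range_eq_Ico]
        rw [← Finset.sum_Ico_consecutive t (Nat.zero_le (2^n))
          (Nat.pow_le_pow_right (by norm_num) (by omega))]
      rw [this]
      exact add_le_add ih le_rfl
  -- conclude
  have hC0 : (0:ℝ≥0∞) < ENNReal.ofReal (a k0) := ENNReal.ofReal_pos.2 (hapos k0)
  have hbound : ∀ n : ℕ, (n : ℝ≥0∞) * ENNReal.ofReal (a k0) ≤ ∑' m, t m := by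
    intro n
    calc (n : ℝ≥0∞) * ENNReal.ofReal (a k0)
        = ∑ _k ∈ Finset.Ico k0 (k0 + n), ENNReal.ofReal (a k0) := by
          rw [Finset.sum_const, Nat.card_Ico, show k0 + n - k0 = n from by omega,
            nsmul_eq_mul]
      _ ≤ ∑ k ∈ Finset.Ico k0 (k0 + n), blk k := by
          apply Finset.sum_le_sum
          intro k hk
          rw [Finset.mem_Ico] at hk
          exact le_trans (ENNReal.ofReal_le_ofReal (hmono k hk.1)) (hblk_ge k)
      _ ≤ ∑ k ∈ Finset.range (k0 + n), blk k := by
          apply Finset.sum_le_sum_of_subset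
          intro k hk
          rw [Finset.mem_Ico] at hk
          exact Finset.mem_range.2 hk.2
      _ ≤ ∑ m ∈ Finset.range (2^(k0+n)), t m := hpart _
      _ ≤ ∑' m, t m := ENNReal.sum_le_tsum _
  refine top_le_iff.1 ?_
  have : (⨆ n : ℕ, (n : ℝ≥0∞)) * ENNReal.ofReal (a k0) ≤ ∑' m, t m := by
    rw [ENNReal.iSup_mul]
    exact iSup_le hbound
  rwa [ENNReal.iSup_natCast, ENNReal.top_mul (ne_of_gt hC0)] at this


/-- partial sums of coordinates of a finite tuple -/
def stmt8_pSum {J : ℕ} (g : Fin J → ℝ) (j : ℕ) : ℝ :=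
  ∑ i ∈ Finset.range j, (if h : i < J then g ⟨i, h⟩ else 0)

lemma stmt8_pSum_meas {J : ℕ} (j : ℕ) : Measurable (fun g : Fin J → ℝ => stmt8_pSum g j) := by
  unfold stmt8_pSum
  apply Finset.measurable_sum
  intro i _
  by_cases h : i < J
  · simp only [h, dif_pos]; exact measurable_pi_apply _
  · simp only [h, dif_neg, not_false_iff]; exact measurable_const

/-- band-type cylinder set -/
def stmt8_band (lo : ℕ → ℝ) (hi : ℕ → ℝ) (J : ℕ) : Set (Fin J → ℝ) :=
  {g | ∀ j : ℕ, 1 ≤ j → j ≤ J → lo j ≤ stmt8_pSum g j ∧ stmt8_pSum g j ≤ hi j}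

lemma stmt8_band_meas (lo hi : ℕ → ℝ) (J : ℕ) : MeasurableSet (stmt8_band lo hi J) := by
  have : stmt8_band lo hi J = ⋂ (j : ℕ), ⋂ (_ : 1 ≤ j), ⋂ (_ : j ≤ J),
      ((fun g : Fin J → ℝ => stmt8_pSum g j) ⁻¹' Set.Icc (lo j) (hi j)) := by
    ext g; simp [stmt8_band, Set.mem_Icc]
  rw [this]
  exact MeasurableSet.iInter fun j => MeasurableSet.iInter fun _ =>
    MeasurableSet.iInter fun _ => (stmt8_pSum_meas j) measurableSet_Icc

/-- law of a shifted iid tuple is the product measure -/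
lemma stmt8_tupleLaw {Ω : Type*} [MeasurableSpace Ω] (P : Measure Ω) [IsProbabilityMeasure P]
    (ν : Measure ℝ) [IsProbabilityMeasure ν]
    (X : ℕ → Ω → ℝ) (hmeas : ∀ n, Measurable (X n))
    (hindep : iIndepFun X P)
    (hlaw : ∀ n, Measure.map (X n) P = ν) (N J : ℕ) :
    Measure.map (fun ω (j : Fin J) => X (N + 1 + (j : ℕ)) ω) P
      = Measure.pi (fun _ : Fin J => ν) := by
  have hTmeas : Measurable (fun ω (j : Fin J) => X (N + 1 + (j : ℕ)) ω) :=
    measurable_pi_lambda _ fun j => hmeas _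
  symm
  apply Measure.pi_eq
  intro s hs
  rw [Measure.map_apply hTmeas (MeasurableSet.univ_pi hs)]
  have hpre : (fun ω (j : Fin J) => X (N + 1 + (j : ℕ)) ω) ⁻¹' (Set.pi Set.univ s)
      = ⋂ j : Fin J, X (N + 1 + (j : ℕ)) ⁻¹' s j := by
    ext ω; simp [Set.mem_pi]
  rw [hpre]
  -- index sets
  set e : Fin J → ℕ := fun j => N + 1 + (j : ℕ) with he
  have hinj : Function.Injective e := by
    intro i j hij
    simp only [he] at hij
    exact Fin.ext (by omega)
  set sets : ℕ → Set ℝ := fun n => if h : n - (N+1) < J ∧ N + 1 ≤ n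
      then s ⟨n - (N+1), h.1⟩ else Set.univ with hsets
  have hsets_e : ∀ j : Fin J, sets (e j) = s j := by
    intro j
    simp only [hsets, he]
    rw [dif_pos (by omega)]
    have hje : (⟨N + 1 + (j:ℕ) - (N+1), by omega⟩ : Fin J) = j := by
      apply Fin.ext
      show N + 1 + (j:ℕ) - (N+1) = (j:ℕ)
      omega
    exact congrArg s hje
  have hmeassets : ∀ i, i ∈ Finset.image e Finset.univ → MeasurableSet (sets i) := by
    intro i _
    simp only [hsets]
    split
    · exact hs _
    · exact MeasurableSet.univ
  have hform := (iIndepFun_iff_measure_inter_preimage_eq_mul.1 hindep)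
    (Finset.image e Finset.univ) hmeassets
  have hint : (⋂ i ∈ Finset.image e Finset.univ, X i ⁻¹' sets i)
      = ⋂ j : Fin J, X (N + 1 + (j : ℕ)) ⁻¹' s j := by
    rw [Finset.set_biInter_finset_image]
    ext ω
    simp only [Set.mem_iInter, Set.mem_preimage, Finset.mem_univ, forall_const]
    exact forall_congr' fun j => by rw [hsets_e j]
  rw [hint] at hform
  rw [hform, Finset.prod_image (fun i _ j _ h => hinj h)]
  apply Finset.prod_congr rfl
  intro j _
  rw [hsets_e j, ← hlaw (e j), Measure.map_apply (hmeas _) (hs j)]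


lemma stmt8_pSum_eval {J : ℕ} (h : ℕ → ℝ) {j : ℕ} (hj : j ≤ J) :
    stmt8_pSum (fun i : Fin J => h (i : ℕ)) j = ∑ i ∈ Finset.range j, h i := by
  unfold stmt8_pSum
  apply Finset.sum_congr rfl
  intro i hi
  rw [Finset.mem_range] at hi
  rw [dif_pos (lt_of_lt_of_le hi hj)]

/-- cylinder set with only an upper bound on partial sums -/
def stmt8_cum (hi : ℝ) (J : ℕ) : Set (Fin J → ℝ) :=
  {g | ∀ j : ℕ, 1 ≤ j → j ≤ J → stmt8_pSum g j ≤ hi}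

lemma stmt8_cum_meas (hi : ℝ) (J : ℕ) : MeasurableSet (stmt8_cum hi J) := by
  have : stmt8_cum hi J = ⋂ (j : ℕ), ⋂ (_ : 1 ≤ j), ⋂ (_ : j ≤ J),
      ((fun g : Fin J → ℝ => stmt8_pSum g j) ⁻¹' Set.Iic hi) := by
    ext g; simp [stmt8_cum]
  rw [this]
  exact MeasurableSet.iInter fun j => MeasurableSet.iInter fun _ =>
    MeasurableSet.iInter fun _ => (stmt8_pSum_meas j) measurableSet_Iic

/-- independence of two disjoint blocks of coordinates -/
lemma stmt8_indep_tuple {Ω : Type*} [MeasurableSpace Ω] {P : Measure Ω}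
    {X : ℕ → Ω → ℝ} (hmeas : ∀ n, Measurable (X n))
    (hindep : iIndepFun X P) (N J : ℕ) :
    IndepFun (fun ω (j : Fin N) => X (0 + 1 + (j : ℕ)) ω)
      (fun ω (j : Fin J) => X (N + 1 + (j : ℕ)) ω) P := by
  have hd : Disjoint (Finset.Icc 1 N) (Finset.Icc (N+1) (N+J)) := by
    rw [Finset.disjoint_left]; intro a ha hb
    rw [Finset.mem_Icc] at ha hb; omega
  have hIF := hindep.indepFun_finset (Finset.Icc 1 N) (Finset.Icc (N+1) (N+J)) hd hmeas
  have hφ1 : Measurable (fun (g : ((Finset.Icc 1 N : Finset ℕ) : Type)  → ℝ) (j : Fin N) =>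
      g ⟨1 + (j:ℕ), by rw [Finset.mem_Icc]; have := j.isLt; omega⟩) :=
    measurable_pi_lambda _ fun j => measurable_pi_apply _
  have hφ2 : Measurable (fun (g : ((Finset.Icc (N+1) (N+J) : Finset ℕ) : Type) → ℝ) (j : Fin J) =>
      g ⟨N + 1 + (j:ℕ), by rw [Finset.mem_Icc]; have := j.isLt; omega⟩) :=
    measurable_pi_lambda _ fun j => measurable_pi_apply _
  exact hIF.comp hφ1 hφ2

/-- independence of an initial block and a single later coordinate -/
lemma stmt8_indep_tupleX {Ω : Type*} [MeasurableSpace Ω] {P : Measure Ω}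
    {X : ℕ → Ω → ℝ} (hmeas : ∀ n, Measurable (X n))
    (hindep : iIndepFun X P) (m : ℕ) :
    IndepFun (fun ω (j : Fin m) => X (0 + 1 + (j : ℕ)) ω) (X (m+1)) P := by
  have hd : Disjoint (Finset.Icc 1 m) ({m+1} : Finset ℕ) := by
    rw [Finset.disjoint_left]; intro a ha hb
    rw [Finset.mem_Icc] at ha; rw [Finset.mem_singleton] at hb; omega
  have hIF := hindep.indepFun_finset (Finset.Icc 1 m) {m+1} hd hmeas
  have hφ1 : Measurable (fun (g : ((Finset.Icc 1 m : Finset ℕ) : Type) → ℝ) (j : Fin m) =>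
      g ⟨1 + (j:ℕ), by rw [Finset.mem_Icc]; have := j.isLt; omega⟩) :=
    measurable_pi_lambda _ fun j => measurable_pi_apply _
  have hφ2 : Measurable (fun (g : (({m+1} : Finset ℕ) : Type) → ℝ) =>
      g ⟨m+1, by rw [Finset.mem_singleton]⟩) := measurable_pi_apply _
  exact hIF.comp hφ1 hφ2

/-- If the increments are regularly varying with tail index `ι ∈ (1,2)` and have
negative mean, then the conditional expected first passage time given ruin is
infinite: `E[τ_b ; τ_b < ∞] = ∞`. -/
theorem stmt8 {Ω : Type*} [MeasurableSpace Ω] (P : Measure Ω) [IsProbabilityMeasure P]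
    (ν : Measure ℝ) [IsProbabilityMeasure ν]
    (X : ℕ → Ω → ℝ) (hmeas : ∀ n, Measurable (X n))
    (hindep : iIndepFun X P)
    (hlaw : ∀ n, Measure.map (X n) P = ν)
    (μ : ℝ) (hμ : μ < 0)
    (hint : Integrable id ν) (hmean : ∫ x, x ∂ν = μ)
    (ι : ℝ) (hι : ι ∈ Set.Ioo (1:ℝ) 2)
    (hpos : ∀ x : ℝ, 0 < (ν (Set.Ioi x)).toReal)
    (hRV : ∀ t > 0, Tendsto
      (fun x => (ν (Set.Ioi (t * x))).toReal / (ν (Set.Ioi x)).toReal)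
      atTop (nhds (t ^ (-ι))))
    (b : ℝ) (hb : 0 < b)
    (S : ℕ → Ω → ℝ) (hS : ∀ n ω, S n ω = ∑ i ∈ Finset.range n, X (i + 1) ω)
    (τ : Ω → ℕ∞) (hτ : ∀ ω, τ ω = ⨅ (n : ℕ) (_ : 1 ≤ n ∧ b < S n ω), (n : ℕ∞)) :
    ∫⁻ ω in {ω | τ ω < ⊤}, ((τ ω : ℕ∞) : ℝ≥0∞) ∂P = ⊤ := by
  obtain ⟨hι1, hι2⟩ := hι
  -- measurability of S
  have hSmeas : ∀ n, Measurable (S n) := by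
    intro n
    have : S n = fun ω => ∑ i ∈ Finset.range n, X (i+1) ω := funext (hS n)
    rw [this]
    exact Finset.measurable_sum _ fun i _ => hmeas _
  have hS0 : ∀ ω, S 0 ω = 0 := fun ω => by rw [hS]; simp
  -- integrability and mean of increments
  have hXint : Integrable (X 1) P := by
    have h2 : Integrable (id ∘ X 1) P := by
      rw [← integrable_map_measure ?_ (hmeas 1).aemeasurable]
      · rw [hlaw 1]; exact hint
      · rw [hlaw 1]; exact hint.1
    simpa using h2
  have hXmean : ∫ ω, X 1 ω ∂P = μ := by
    have h2 : ∫ x, id x ∂(Measure.map (X 1) P) = ∫ ω, id (X 1 ω) ∂P :=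
      integral_map (hmeas 1).aemeasurable measurable_id.aestronglyMeasurable
    rw [hlaw 1] at h2
    simp only [id_eq] at h2
    rw [← h2, hmean]
  -- SLLN
  have hSLLN : ∀ᵐ ω ∂P, Tendsto (fun n => S n ω / n) atTop (nhds μ) := by
    have hident : ∀ i : ℕ, IdentDistrib (X (i+1)) (X (0+1)) P P := fun i =>
      { aemeasurable_fst := (hmeas _).aemeasurable
        aemeasurable_snd := (hmeas _).aemeasurable
        map_eq := by rw [hlaw, hlaw] }
    have hpair : Pairwise (Function.onFun (IndepFun · · P) fun i : ℕ => X (i+1)) := fun i j hij =>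
      hindep.indepFun (by simpa using hij)
    have h0 : Integrable ((fun i : ℕ => X (i+1)) 0) P := hXint
    have hsl := strong_law_ae_real (fun i : ℕ => X (i+1)) h0 hpair hident
    have hmeanP : P[(fun i : ℕ => X (i+1)) 0] = μ := hXmean
    rw [hmeanP] at hsl
    filter_upwards [hsl] with ω hω
    have heq : (fun n : ℕ => (∑ i ∈ Finset.range n, X (i+1) ω) / n)
        = fun n : ℕ => S n ω / n := by
      funext n; rw [hS]
    rwa [heq] at hω
  -- a.s. eventual bounds
  have hub : ∀ᵐ ω ∂P, ∃ Mb : ℕ, ∀ n, 1 ≤ n → S n ω ≤ Mb := by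
    filter_upwards [hSLLN] with ω hω
    have hev : ∀ᶠ n : ℕ in atTop, S n ω / n < 0 := hω.eventually (eventually_lt_nhds hμ)
    obtain ⟨n1, hn1⟩ := hev.exists_forall_of_atTop
    refine ⟨⌈∑ k ∈ Finset.range (n1+1), |S k ω|⌉₊, ?_⟩
    intro n hn
    rcases le_or_gt n1 n with h | h
    · have hn0 : (0:ℝ) < n := by exact_mod_cast hn
      have hneg : S n ω < 0 := by
        by_contra hcon; push_neg at hcon
        have : 0 ≤ S n ω / n := div_nonneg hcon (le_of_lt hn0)
        linarith [hn1 n h]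
      calc S n ω ≤ 0 := le_of_lt hneg
        _ ≤ _ := Nat.cast_nonneg _
    · calc S n ω ≤ |S n ω| := le_abs_self _
        _ ≤ ∑ k ∈ Finset.range (n1+1), |S k ω| :=
            Finset.single_le_sum (f := fun k => |S k ω|) (fun k _ => abs_nonneg _)
              (Finset.mem_range.2 (by omega))
        _ ≤ _ := Nat.le_ceil _
  have hlba : ∀ᵐ ω ∂P, ∃ Ab : ℕ, ∀ n, 1 ≤ n → 2*μ*n - Ab ≤ S n ω := by
    filter_upwards [hSLLN] with ω hω
    have hev : ∀ᶠ n : ℕ in atTop, 2*μ < S n ω / n :=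
      hω.eventually (eventually_gt_nhds (by linarith))
    obtain ⟨n1, hn1⟩ := hev.exists_forall_of_atTop
    refine ⟨⌈∑ k ∈ Finset.range (n1+1), |2*μ*k - S k ω|⌉₊, ?_⟩
    intro n hn
    rcases le_or_gt n1 n with h | h
    · have hn0 : (0:ℝ) < n := by exact_mod_cast hn
      have h2 := hn1 n h
      rw [lt_div_iff₀ hn0] at h2
      have hc : (0:ℝ) ≤ ⌈∑ k ∈ Finset.range (n1+1), |2*μ*k - S k ω|⌉₊ := Nat.cast_nonneg _
      nlinarith
    · have h1 : 2*μ*n - S n ω ≤ |2*μ*n - S n ω| := le_abs_self _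
      have h2 : |2*μ*n - S n ω| ≤ ∑ k ∈ Finset.range (n1+1), |2*μ*k - S k ω| :=
        Finset.single_le_sum (f := fun k => |2*μ*k - S k ω|) (fun k _ => abs_nonneg _)
          (Finset.mem_range.2 (by omega))
      have h3 := Nat.le_ceil (∑ k ∈ Finset.range (n1+1), |2*μ*k - S k ω|)
      linarith
  -- choose M with P(G M) > 1/2
  set G : ℕ → Set Ω := fun Mb => {ω | ∀ n, 1 ≤ n → S n ω ≤ Mb} with hG
  have hGmeas : ∀ Mb, MeasurableSet (G Mb) := by
    intro Mb
    have : G Mb = ⋂ (n:ℕ), ⋂ (_ : 1 ≤ n), S n ⁻¹' Set.Iic (Mb:ℝ) := by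
      ext ω; simp [hG]
    rw [this]
    exact MeasurableSet.iInter fun n => MeasurableSet.iInter fun _ =>
      (hSmeas n) measurableSet_Iic
  have hGmono : Monotone G := by
    intro a c hac ω hω n hn
    exact le_trans (hω n hn) (by exact_mod_cast hac)
  have hGuni : P (⋃ Mb, G Mb) = 1 := by
    apply le_antisymm prob_le_one
    rw [show (1:ℝ≥0∞) = P Set.univ from measure_univ.symm]
    apply measure_mono_ae
    filter_upwards [hub] with ω hω
    intro _
    obtain ⟨Mb, hMb⟩ := hω
    exact Set.mem_iUnion.2 ⟨Mb, hMb⟩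
  obtain ⟨M, hM⟩ : ∃ Mb, (1:ℝ≥0∞)/2 < P (G Mb) := by
    have ht := tendsto_measure_iUnion_atTop (μ := P) hGmono
    rw [hGuni] at ht
    exact (ht.eventually (eventually_gt_nhds (by norm_num))).exists
  -- choose δ with ν(Iic (-δ)) > 0
  obtain ⟨δ, hδpos, hδ⟩ : ∃ δ : ℝ, 0 < δ ∧ 0 < ν (Set.Iic (-δ)) := by
    by_contra hcon
    push_neg at hcon
    have hzero : ∀ δ : ℝ, 0 < δ → ν (Set.Iic (-δ)) = 0 := fun δ h =>
      le_antisymm (hcon δ h) zero_le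
    have hnull : ν (Set.Iio 0) = 0 := by
      have hun : Set.Iio (0:ℝ) = ⋃ n : ℕ, Set.Iic (-(1/((n:ℝ)+1))) := by
        ext x; simp only [Set.mem_Iio, Set.mem_iUnion, Set.mem_Iic]
        constructor
        · intro hx
          obtain ⟨n, hn⟩ := exists_nat_one_div_lt (by linarith : (0:ℝ) < -x)
          exact ⟨n, by linarith⟩
        · rintro ⟨n, hn⟩
          have : (0:ℝ) < 1/((n:ℝ)+1) := by positivity
          linarith
      rw [hun]
      refine le_antisymm (le_trans (measure_iUnion_le _) ?_) zero_le
      have hz : ∀ n : ℕ, ν (Set.Iic (-(((n:ℝ)+1)⁻¹))) = 0 := fun n =>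
        hzero _ (by positivity)
      simp [hz]
    have hae : 0 ≤ᵐ[ν] id := by
      rw [Filter.EventuallyLE, ae_iff]
      simp only [Pi.zero_apply, id_eq, not_le]
      exact hnull
    have hge : 0 ≤ ∫ x, x ∂ν := by
      have := integral_nonneg_of_ae (μ := ν) (f := id) hae
      simpa using this
    rw [hmean] at hge; linarith
  -- N with N δ ≥ M
  set N : ℕ := ⌈(M:ℝ)/δ⌉₊ with hN
  have hNδ : (M:ℝ) ≤ N * δ := by
    have h1 := Nat.le_ceil ((M:ℝ)/δ)
    calc (M:ℝ) = ((M:ℝ)/δ) * δ := by field_simp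
      _ ≤ N * δ := mul_le_mul_of_nonneg_right h1 (le_of_lt hδpos)
  -- the small-steps event E1
  set E1 : Set Ω := (fun ω (j : Fin N) => X (0 + 1 + (j:ℕ)) ω) ⁻¹'
      (Set.univ.pi fun _ => Set.Iic (-δ)) with hE1
  have hTmeas : ∀ N' J : ℕ, Measurable (fun ω (j : Fin J) => X (N' + 1 + (j:ℕ)) ω) :=
    fun N' J => measurable_pi_lambda _ fun j => hmeas _
  have hE1meas : MeasurableSet E1 :=
    (hTmeas 0 N) (MeasurableSet.univ_pi fun _ => measurableSet_Iic)
  have hE1val : P E1 = ν (Set.Iic (-δ)) ^ N := by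
    rw [hE1, ← Measure.map_apply (hTmeas 0 N)
      (MeasurableSet.univ_pi fun _ => measurableSet_Iic),
      stmt8_tupleLaw P ν X hmeas hindep hlaw 0 N, Measure.pi_pi]
    simp
  have hE1pos : 0 < P E1 := by
    rw [hE1val]
    exact ENNReal.pow_pos hδ N
  -- the events E2J and their probabilities
  set E2J : ℕ → Set Ω := fun J => (fun ω (j : Fin J) => X (N + 1 + (j:ℕ)) ω) ⁻¹'
      stmt8_cum M J with hE2J
  set GJ : ℕ → Set Ω := fun J => (fun ω (j : Fin J) => X (0 + 1 + (j:ℕ)) ω) ⁻¹'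
      stmt8_cum M J with hGJ
  have hE2Jmeas : ∀ J, MeasurableSet (E2J J) := fun J => (hTmeas N J) (stmt8_cum_meas _ _)
  have hsum0 : ∀ (j : ℕ) (ω : Ω), (∑ i ∈ Finset.range j, X (0+1+i) ω) = S j ω := by
    intro j ω; rw [hS]
    apply Finset.sum_congr rfl; intro i _; congr 1; omega
  have hE2Jval : ∀ J, E2J J
      = {ω | ∀ j, 1 ≤ j → j ≤ J → (∑ i ∈ Finset.range j, X (N+1+i) ω) ≤ M} := by
    intro J; ext ω
    simp only [hE2J, Set.mem_preimage, stmt8_cum, Set.mem_setOf_eq]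
    constructor
    · intro h j h1 h2
      have := h j h1 h2
      rwa [stmt8_pSum_eval (fun i => X (N+1+i) ω) h2] at this
    · intro h j h1 h2
      rw [stmt8_pSum_eval (fun i => X (N+1+i) ω) h2]
      exact h j h1 h2
  have hGJval : ∀ J, GJ J = {ω | ∀ j, 1 ≤ j → j ≤ J → S j ω ≤ M} := by
    intro J; ext ω
    simp only [hGJ, Set.mem_preimage, stmt8_cum, Set.mem_setOf_eq]
    constructor
    · intro h j h1 h2
      have := h j h1 h2
      rwa [stmt8_pSum_eval (fun i => X (0+1+i) ω) h2, hsum0 j ω] at this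
    · intro h j h1 h2
      rw [stmt8_pSum_eval (fun i => X (0+1+i) ω) h2, hsum0 j ω]
      exact h j h1 h2
  have hPE2J : ∀ J, P (E2J J) = P (GJ J) := by
    intro J
    rw [hE2J, hGJ,
      ← Measure.map_apply (hTmeas N J) (stmt8_cum_meas _ _),
      ← Measure.map_apply (hTmeas 0 J) (stmt8_cum_meas _ _),
      stmt8_tupleLaw P ν X hmeas hindep hlaw N J,
      stmt8_tupleLaw P ν X hmeas hindep hlaw 0 J]
  have hindepJ : ∀ J, P (E1 ∩ E2J J) = P E1 * P (E2J J) := by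
    intro J
    have hIF := stmt8_indep_tuple hmeas hindep N J
    exact hIF.measure_inter_preimage_eq_mul _ _
      (MeasurableSet.univ_pi fun _ => measurableSet_Iic) (stmt8_cum_meas _ _)
  -- pass to the limit
  set E2 : Set Ω := {ω | ∀ j, 1 ≤ j → (∑ i ∈ Finset.range j, X (N+1+i) ω) ≤ M} with hE2
  have hE2inter : (⋂ J, E2J J) = E2 := by
    ext ω
    simp only [Set.mem_iInter, hE2Jval, Set.mem_setOf_eq, hE2]
    constructor
    · intro h j hj; exact h j j hj le_rfl
    · intro h J j h1 _; exact h j h1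
  have hE2Janti : Antitone E2J := by
    intro J J' h ω
    rw [hE2Jval, hE2Jval]
    intro hω j h1 h2
    exact hω j h1 (le_trans h2 h)
  have hGJanti : Antitone GJ := by
    intro J J' h ω
    rw [hGJval, hGJval]
    intro hω j h1 h2
    exact hω j h1 (le_trans h2 h)
  have hGJinter : (⋂ J, GJ J) = G M := by
    ext ω
    simp only [Set.mem_iInter, hGJval, Set.mem_setOf_eq, hG]
    constructor
    · intro h j hj; exact h j j hj le_rfl
    · intro h J j h1 _; exact h j h1
  have hGJmeas : ∀ J, MeasurableSet (GJ J) := fun J => (hTmeas 0 J) (stmt8_cum_meas _ _)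
  have hPE2 : P E2 = P (G M) := by
    rw [← hE2inter, ← hGJinter,
      Antitone.measure_iInter hE2Janti (fun J => (hE2Jmeas J).nullMeasurableSet)
        ⟨0, measure_ne_top P _⟩,
      Antitone.measure_iInter hGJanti (fun J => (hGJmeas J).nullMeasurableSet)
        ⟨0, measure_ne_top P _⟩]
    exact iInf_congr hPE2J
  have hq : P (E1 ∩ E2) = P E1 * P (G M) := by
    have h1 : E1 ∩ E2 = ⋂ J, (E1 ∩ E2J J) := by
      rw [← hE2inter, Set.inter_iInter]
    rw [h1, Antitone.measure_iInter
      (fun J J' h => Set.inter_subset_inter_right _ (hE2Janti h))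
      (fun J => (hE1meas.inter (hE2Jmeas J)).nullMeasurableSet)
      ⟨0, measure_ne_top P _⟩]
    calc ⨅ J, P (E1 ∩ E2J J) = ⨅ J, P E1 * P (E2J J) := iInf_congr hindepJ
      _ = P E1 * ⨅ J, P (E2J J) :=
          (ENNReal.mul_iInf_of_ne (ne_of_gt hE1pos) (measure_ne_top _ _)).symm
      _ = P E1 * P E2 := by
          rw [← hE2inter, Antitone.measure_iInter hE2Janti
            (fun J => (hE2Jmeas J).nullMeasurableSet) ⟨0, measure_ne_top P _⟩]
      _ = P E1 * P (G M) := by rw [hPE2]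
  set q : ℝ≥0∞ := P E1 * P (G M) with hqdef
  have hq0 : q ≠ 0 := by
    apply mul_ne_zero (ne_of_gt hE1pos)
    exact ne_of_gt (lt_trans (by norm_num) hM)
  have hqtop : q ≠ ⊤ := ENNReal.mul_ne_top (measure_ne_top P _) (measure_ne_top P _)
  have hqle : q ≤ 1 := by
    calc q ≤ 1 * 1 := mul_le_mul' prob_le_one prob_le_one
      _ = 1 := one_mul 1
  -- E1 ∩ E2 keeps the walk below b
  set Ub : Set Ω := {ω | ∀ n, 1 ≤ n → S n ω ≤ b} with hUbdef
  have hsubUb : E1 ∩ E2 ⊆ Ub := by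
    rintro ω ⟨h1, h2⟩ n hn
    have hX1 : ∀ i, 1 ≤ i → i ≤ N → X i ω ≤ -δ := by
      intro i hi1 hi2
      have h1' := Set.mem_pi.1 h1
      have := h1' ⟨i - 1, by omega⟩ (Set.mem_univ _)
      simp only [Set.mem_Iic] at this
      have heq : 0 + 1 + (i - 1) = i := by omega
      rwa [heq] at this
    have hSN : ∀ n', n' ≤ N → S n' ω ≤ -((n':ℝ) * δ) := by
      intro n' hn'
      rw [hS]
      calc ∑ i ∈ Finset.range n', X (i+1) ω ≤ ∑ _i ∈ Finset.range n', (-δ) :=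
            Finset.sum_le_sum fun i hi => hX1 (i+1) (by omega)
              (by rw [Finset.mem_range] at hi; omega)
        _ = -((n':ℝ) * δ) := by
            rw [Finset.sum_const, Finset.card_range, nsmul_eq_mul]; ring
    rcases le_or_gt n N with h | h
    · calc S n ω ≤ -((n:ℝ) * δ) := hSN n h
        _ ≤ 0 := by
            have : (0:ℝ) ≤ (n:ℝ) * δ := by positivity
            linarith
        _ ≤ b := le_of_lt hb
    · obtain ⟨j, rfl⟩ : ∃ j, n = N + j := ⟨n - N, by omega⟩
      have hj1 : 1 ≤ j := by omega
      have hsplit : S (N+j) ω = S N ω + ∑ i ∈ Finset.range j, X (N+1+i) ω := by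
        rw [hS, hS, Finset.sum_range_add]
        congr 1
        · apply Finset.sum_congr rfl; intro i _; congr 1; omega
      have h2' := h2 j hj1
      have hSNle : S N ω ≤ -((N:ℝ)*δ) := hSN N le_rfl
      have hfin : S (N+j) ω ≤ -((N:ℝ)*δ) + M := by rw [hsplit]; linarith
      linarith
  -- choose A
  set LB : ℕ → Set Ω := fun Ab => {ω | ∀ n, 1 ≤ n → 2*μ*n - Ab ≤ S n ω} with hLBdef
  have hLBmeas : ∀ Ab, MeasurableSet (LB Ab) := by
    intro Ab
    have : LB Ab = ⋂ (n:ℕ), ⋂ (_ : 1 ≤ n), S n ⁻¹' Set.Ici (2*μ*n - Ab) := by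
      ext ω; simp [hLBdef]
    rw [this]
    exact MeasurableSet.iInter fun n => MeasurableSet.iInter fun _ =>
      (hSmeas n) measurableSet_Ici
  have hLBmono : Monotone LB := by
    intro a c hac ω hω n hn
    have : 2*μ*n - (c:ℝ) ≤ 2*μ*n - (a:ℝ) := by
      have : (a:ℝ) ≤ c := by exact_mod_cast hac
      linarith
    exact le_trans this (hω n hn)
  have hLBuni : P (⋃ Ab, LB Ab) = 1 := by
    apply le_antisymm prob_le_one
    rw [show (1:ℝ≥0∞) = P Set.univ from measure_univ.symm]
    apply measure_mono_ae
    filter_upwards [hlba] with ω hω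
    intro _
    obtain ⟨Ab, hAb⟩ := hω
    exact Set.mem_iUnion.2 ⟨Ab, hAb⟩
  obtain ⟨A, hA⟩ : ∃ Ab, 1 - q/2 < P (LB Ab) := by
    have ht := tendsto_measure_iUnion_atTop (μ := P) hLBmono
    rw [hLBuni] at ht
    have hlt : (1:ℝ≥0∞) - q/2 < 1 := by
      apply ENNReal.sub_lt_self ENNReal.one_ne_top one_ne_zero
      simp [ENNReal.div_eq_top, hq0]
    exact (ht.eventually (eventually_gt_nhds hlt)).exists
  have hq2top : q/2 ≠ ⊤ := by
    simp [ENNReal.div_eq_top, hqtop]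
  have hcompl : P ((LB A)ᶜ) < q / 2 := by
    rw [prob_compl_eq_one_sub (hLBmeas A)]
    have hq2le : q/2 ≤ 1 := le_trans (ENNReal.half_le_self) hqle
    have h1 : (1:ℝ≥0∞) < q/2 + P (LB A) := by
      calc (1:ℝ≥0∞) = q/2 + (1 - q/2) := (add_tsub_cancel_of_le hq2le).symm
        _ < q/2 + P (LB A) := ENNReal.add_lt_add_left hq2top hA
    rw [ENNReal.sub_lt_iff_lt_right (measure_ne_top P _) prob_le_one]
    exact h1
  -- the global band event
  set Binf : Set Ω := Ub ∩ LB A with hBinfdef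
  have hBpos : q/2 ≤ P Binf := by
    have hsub : E1 ∩ E2 ⊆ Binf ∪ (LB A)ᶜ := by
      intro ω hω
      by_cases hl : ω ∈ LB A
      · exact Or.inl ⟨hsubUb hω, hl⟩
      · exact Or.inr hl
    have h1 : q ≤ P Binf + P ((LB A)ᶜ) := by
      rw [← hq]
      exact le_trans (measure_mono hsub) (measure_union_le _ _)
    have h2 : q ≤ P Binf + q/2 :=
      le_trans h1 (add_le_add_right (le_of_lt hcompl) _)
    have h3 : q - q/2 ≤ P Binf := tsub_le_iff_right.2 h2
    rwa [ENNReal.sub_half hqtop] at h3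
  have hpB0 : P Binf ≠ 0 := by
    have : (0:ℝ≥0∞) < q/2 := ENNReal.half_pos hq0
    exact ne_of_gt (lt_of_lt_of_le this hBpos)
  -- the band events and jump events
  set lo : ℕ → ℝ := fun n => 2*μ*n - A with hlo
  set Bm : ℕ → Set Ω := fun m => (fun ω (j : Fin m) => X (0 + 1 + (j:ℕ)) ω) ⁻¹'
      stmt8_band lo (fun _ => b) m with hBm
  have hBmval : ∀ m, Bm m = {ω | ∀ n, 1 ≤ n → n ≤ m → lo n ≤ S n ω ∧ S n ω ≤ b} := by
    intro m; ext ω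
    simp only [hBm, Set.mem_preimage, stmt8_band, Set.mem_setOf_eq]
    constructor
    · intro h n h1 h2
      have := h n h1 h2
      rwa [stmt8_pSum_eval (fun i => X (0+1+i) ω) h2, hsum0 n ω] at this
    · intro h n h1 h2
      rw [stmt8_pSum_eval (fun i => X (0+1+i) ω) h2, hsum0 n ω]
      exact h n h1 h2
  have hBmmeas : ∀ m, MeasurableSet (Bm m) := fun m =>
    (hTmeas 0 m) (stmt8_band_meas _ _ _)
  have hBinfsub : ∀ m, Binf ⊆ Bm m := by
    intro m ω hω
    rw [hBmval]
    intro n h1 _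
    exact ⟨hω.2 n h1, hω.1 n h1⟩
  set v : ℕ → ℝ := fun m => (b + A) + (-(2*μ)) * m with hv
  set K : ℕ → Set Ω := fun m => Bm m ∩ X (m+1) ⁻¹' Set.Ioi (v m) with hK
  have hKmeas : ∀ m, MeasurableSet (K m) := fun m =>
    (hBmmeas m).inter ((hmeas _) measurableSet_Ioi)
  have hKS : ∀ m ω, ω ∈ K m → b < S (m+1) ω := by
    rintro m ω ⟨hbm, hjump⟩
    have hsm : lo m ≤ S m ω := by
      rcases Nat.eq_zero_or_pos m with rfl | hm
      · rw [hS0]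
        simp only [hlo, Nat.cast_zero, mul_zero, zero_sub]
        have : (0:ℝ) ≤ (A:ℝ) := Nat.cast_nonneg _
        linarith
      · exact ((hBmval m ▸ hbm) m hm le_rfl).1
    have hj : v m < X (m+1) ω := hjump
    have hsucc : S (m+1) ω = S m ω + X (m+1) ω := by
      rw [hS, hS, Finset.sum_range_succ]
    rw [hsucc]
    simp only [hlo] at hsm
    simp only [hv] at hj
    nlinarith
  have hKb : ∀ m ω, ω ∈ K m → ∀ n, 1 ≤ n → n ≤ m → S n ω ≤ b := by
    rintro m ω ⟨hbm, _⟩ n h1 h2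
    exact ((hBmval m ▸ hbm) n h1 h2).2
  have hKtau : ∀ m ω, ω ∈ K m → τ ω = ((m+1 : ℕ) : ℕ∞) := by
    intro m ω hω
    rw [hτ]
    apply le_antisymm
    · exact iInf_le_of_le (m+1) (iInf_le _ ⟨by omega, hKS m ω hω⟩)
    · apply le_iInf; intro n; apply le_iInf; intro hn
      have : m+1 ≤ n := by
        by_contra hc
        push_neg at hc
        have := hKb m ω hω n hn.1 (by omega)
        linarith [hn.2]
      exact_mod_cast this
  have hKdisj : Pairwise (Function.onFun Disjoint K) := by
    have key : ∀ m m', m < m' → Disjoint (K m) (K m') := by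
      intro m m' h
      rw [Set.disjoint_left]
      intro ω hω hω'
      have h1 : b < S (m+1) ω := hKS m ω hω
      have h2 : S (m+1) ω ≤ b := hKb m' ω hω' (m+1) (by omega) (by omega)
      linarith
    intro m m' hmm
    rcases lt_or_gt_of_ne hmm with h | h
    · exact key m m' h
    · exact (key m' m h).symm
  have hKV : ∀ m, K m ⊆ {ω | τ ω < ⊤} := by
    intro m ω hω
    simp only [Set.mem_setOf_eq, hKtau m ω hω]
    exact ENat.coe_lt_top _
  -- probability of K m
  have hKval : ∀ m, P (K m) = P (Bm m) * ν (Set.Ioi (v m)) := by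
    intro m
    have hIF := stmt8_indep_tupleX hmeas hindep m
    have heq := hIF.measure_inter_preimage_eq_mul _ _
      (stmt8_band_meas lo (fun _ => b) m) (measurableSet_Ioi (a := v m))
    rw [hK]
    simp only [hBm]
    rw [heq, ← hlaw (m+1), Measure.map_apply (hmeas _) measurableSet_Ioi]
  -- divergence
  set W : ℝ → ℝ≥0∞ := fun x => ν (Set.Ioi x) with hWdef
  have hdivsum : ∑' m : ℕ, ((m:ℝ≥0∞)+1) * W (v m) = ⊤ := by
    have hanti : Antitone (fun x => (ν (Set.Ioi x)).toReal) := by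
      intro x y hxy
      exact ENNReal.toReal_mono (measure_ne_top ν _)
        (measure_mono (Set.Ioi_subset_Ioi hxy))
    have hd := stmt8_div (fun x => (ν (Set.Ioi x)).toReal) hanti hpos ι hι1 hι2 hRV
      (-(2*μ)) (b+(A:ℝ)) (by linarith) (by positivity)
    calc ∑' m:ℕ, ((m:ℝ≥0∞)+1) * W (v m)
        = ∑' m:ℕ, ((m:ℝ≥0∞)+1)
            * ENNReal.ofReal ((ν (Set.Ioi ((b+(A:ℝ)) + (-(2*μ))*(m:ℝ)))).toReal) := by
          apply tsum_congr; intro m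
          rw [hWdef, hv]
          congr 1
          exact (ENNReal.ofReal_toReal (measure_ne_top ν _)).symm
      _ = ⊤ := hd
  -- final assembly
  have main : (⊤:ℝ≥0∞) ≤ ∫⁻ ω in {ω | τ ω < ⊤}, ((τ ω : ℕ∞) : ℝ≥0∞) ∂P := by
    have h1 : ∫⁻ ω in ⋃ m, K m, ((τ ω : ℕ∞) : ℝ≥0∞) ∂P
        ≤ ∫⁻ ω in {ω | τ ω < ⊤}, ((τ ω : ℕ∞) : ℝ≥0∞) ∂P :=
      lintegral_mono' (Measure.restrict_mono (Set.iUnion_subset hKV) le_rfl) le_rfl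
    have h2 : ∫⁻ ω in ⋃ m, K m, ((τ ω : ℕ∞) : ℝ≥0∞) ∂P
        = ∑' m, ∫⁻ ω in K m, ((τ ω : ℕ∞) : ℝ≥0∞) ∂P :=
      lintegral_iUnion hKmeas hKdisj _
    have h3 : ∀ m, ∫⁻ ω in K m, ((τ ω : ℕ∞) : ℝ≥0∞) ∂P = ((m:ℝ≥0∞)+1) * P (K m) := by
      intro m
      rw [setLIntegral_congr_fun (hKmeas m)
        (fun ω hω => by rw [hKtau m ω hω])]
      rw [setLIntegral_const]
      congr 1
      push_cast
      rfl
    have h4 : ∀ m : ℕ, P Binf * (((m:ℝ≥0∞)+1) * W (v m)) ≤ ((m:ℝ≥0∞)+1) * P (K m) := by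
      intro m
      rw [hKval m]
      calc P Binf * (((m:ℝ≥0∞)+1) * W (v m)) = ((m:ℝ≥0∞)+1) * (P Binf * W (v m)) := by
            ring
        _ ≤ ((m:ℝ≥0∞)+1) * (P (Bm m) * W (v m)) :=
            mul_le_mul' le_rfl (mul_le_mul' (measure_mono (hBinfsub m)) le_rfl)
    calc (⊤:ℝ≥0∞) = P Binf * ⊤ := (ENNReal.mul_top hpB0).symm
      _ = P Binf * ∑' m : ℕ, ((m:ℝ≥0∞)+1) * W (v m) := by rw [hdivsum]
      _ = ∑' m : ℕ, P Binf * (((m:ℝ≥0∞)+1) * W (v m)) := ENNReal.tsum_mul_left.symm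
      _ ≤ ∑' m : ℕ, ((m:ℝ≥0∞)+1) * P (K m) := ENNReal.tsum_le_tsum h4
      _ = ∑' m, ∫⁻ ω in K m, ((τ ω : ℕ∞) : ℝ≥0∞) ∂P := (tsum_congr h3).symm
      _ = ∫⁻ ω in ⋃ m, K m, ((τ ω : ℕ∞) : ℝ≥0∞) ∂P := h2.symm
      _ ≤ _ := h1
  exact top_unique main
end

section
/- Fix θ > 0, |μ| > 0, and ι > 1, and let a(b) = G(b)/F̄(b) where F̄ is regularly varying with index ι and G is its integrated tail. Then for each t ≥ 0, Σ_{j=0}^{⌊t a(b)⌋} 2θ F̄(b + j|μ|)/G(b + j|μ|) → (2θ(ι−1)/|μ|) · log(1 + |μ| t/(ι−1)) as b → ∞. -/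
open MeasureTheory Real Filter

section Aux
variable {Fbar : ℝ → ℝ}

noncomputable def Gt (Fbar : ℝ → ℝ) (b : ℝ) : ℝ := ∫ s in Set.Ioi b, Fbar s

lemma G_split (hInt : ∀ b : ℝ, IntegrableOn Fbar (Set.Ioi b)) {b c : ℝ} (h : b ≤ c) :
    Gt Fbar b = (∫ s in Set.Ioc b c, Fbar s) + Gt Fbar c := by
  rw [Gt, Gt, ← Set.Ioc_union_Ioi_eq_Ioi h,
    MeasureTheory.setIntegral_union (Set.Ioc_disjoint_Ioi le_rfl) measurableSet_Ioi
      ((hInt b).mono_set Set.Ioc_subset_Ioi_self) (hInt c)]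

lemma slab_le (hanti : Antitone Fbar) (hInt : ∀ b : ℝ, IntegrableOn Fbar (Set.Ioi b))
    {b c : ℝ} (h : b ≤ c) : (∫ s in Set.Ioc b c, Fbar s) ≤ (c - b) * Fbar b := by
  have : (∫ s in Set.Ioc b c, Fbar s) ≤ ∫ _ in Set.Ioc b c, Fbar b := by
    apply MeasureTheory.setIntegral_mono_on ((hInt b).mono_set Set.Ioc_subset_Ioi_self)
      (integrableOn_const measure_Ioc_lt_top.ne) measurableSet_Ioc
    exact fun x hx => hanti hx.1.le
  simpa [Real.volume_Ioc, ENNReal.toReal_ofReal (sub_nonneg.2 h), max_eq_left (sub_nonneg.2 h), mul_comm] using this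

lemma le_slab (hanti : Antitone Fbar) (hInt : ∀ b : ℝ, IntegrableOn Fbar (Set.Ioi b))
    {b c : ℝ} (h : b ≤ c) : (c - b) * Fbar c ≤ ∫ s in Set.Ioc b c, Fbar s := by
  have : (∫ _ in Set.Ioc b c, Fbar c) ≤ ∫ s in Set.Ioc b c, Fbar s := by
    apply MeasureTheory.setIntegral_mono_on (integrableOn_const measure_Ioc_lt_top.ne)
      ((hInt b).mono_set Set.Ioc_subset_Ioi_self) measurableSet_Ioc
    exact fun x hx => hanti hx.2
  simpa [Real.volume_Ioc, ENNReal.toReal_ofReal (sub_nonneg.2 h), max_eq_left (sub_nonneg.2 h), mul_comm] using this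

lemma G_pos (hpos : ∀ x, 0 < Fbar x) (hanti : Antitone Fbar)
    (hInt : ∀ b : ℝ, IntegrableOn Fbar (Set.Ioi b)) (b : ℝ) : 0 < Gt Fbar b := by
  have h1 : (0:ℝ) < (b + 1 - b) * Fbar (b + 1) := by
    have := hpos (b+1); nlinarith
  calc (0:ℝ) < (b + 1 - b) * Fbar (b+1) := h1
    _ ≤ ∫ s in Set.Ioc b (b+1), Fbar s := le_slab hanti hInt (by linarith)
    _ ≤ Gt Fbar b := by
        rw [G_split hInt (show b ≤ b + 1 by linarith)]
        have : 0 ≤ Gt Fbar (b+1) :=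
          MeasureTheory.setIntegral_nonneg measurableSet_Ioi (fun x _ => (hpos x).le)
        linarith

lemma G_anti (hpos : ∀ x, 0 < Fbar x) (hanti : Antitone Fbar)
    (hInt : ∀ b : ℝ, IntegrableOn Fbar (Set.Ioi b)) : Antitone (Gt Fbar) := by
  intro b c h
  rw [G_split hInt h]
  have : 0 ≤ ∫ s in Set.Ioc b c, Fbar s :=
    MeasureTheory.setIntegral_nonneg measurableSet_Ioc (fun x _ => (hpos x).le)
  linarith

lemma G_tendsto (hpos : ∀ x, 0 < Fbar x)
    (hInt : ∀ b : ℝ, IntegrableOn Fbar (Set.Ioi b)) :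
    Tendsto (Gt Fbar) atTop (nhds 0) := by
  have key : Tendsto (fun b : ℝ => ∫ s in Set.Ioc 0 b, Fbar s) atTop (nhds (Gt Fbar 0)) := by
    have := MeasureTheory.tendsto_setIntegral_of_monotone (μ := volume)
      (f := Fbar) (s := fun b : ℝ => Set.Ioc (0:ℝ) b) (fun b => measurableSet_Ioc)
      (fun b c h => Set.Ioc_subset_Ioc_right h) ?_
    · have hU : ⋃ b : ℝ, Set.Ioc (0:ℝ) b = Set.Ioi 0 := by
        ext x; simp only [Set.mem_iUnion, Set.mem_Ioc, Set.mem_Ioi]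
        exact ⟨fun ⟨b, h1, _⟩ => h1, fun h => ⟨x, h, le_rfl⟩⟩
      rwa [hU] at this
    · rw [show ⋃ b : ℝ, Set.Ioc (0:ℝ) b = Set.Ioi 0 from by
        ext x; simp only [Set.mem_iUnion, Set.mem_Ioc, Set.mem_Ioi]
        exact ⟨fun ⟨b, h1, _⟩ => h1, fun h => ⟨x, h, le_rfl⟩⟩]
      exact hInt 0
  have heq : ∀ᶠ b : ℝ in atTop, Gt Fbar b = Gt Fbar 0 - ∫ s in Set.Ioc 0 b, Fbar s := by
    filter_upwards [eventually_ge_atTop (0:ℝ)] with b hb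
    rw [G_split hInt hb]; ring
  rw [Filter.tendsto_congr' heq]
  simpa using (tendsto_const_nhds (x := Gt Fbar 0)).sub key

end Aux

lemma phi_tendsto {ι : ℝ} (hι : 1 < ι) :
    Tendsto (fun l : ℝ => (1 - l ^ (1-ι)) / (l - 1)) (nhdsWithin 1 (Set.Ioi 1))
      (nhds (ι - 1)) := by
  have hderiv : HasDerivAt (fun x : ℝ => x ^ (1-ι)) ((1-ι) * (1:ℝ) ^ (1-ι-1)) 1 :=
    Real.hasDerivAt_rpow_const (Or.inl one_ne_zero)
  have hslope := hasDerivAt_iff_tendsto_slope.1 hderiv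
  have h1 : ((1:ℝ)-ι) * (1:ℝ) ^ (1-ι-1) = 1 - ι := by
    rw [Real.one_rpow, mul_one]
  rw [h1] at hslope
  have hsub : Tendsto (fun l : ℝ => slope (fun x : ℝ => x ^ (1-ι)) 1 l)
      (nhdsWithin 1 (Set.Ioi 1)) (nhds (1-ι)) :=
    hslope.mono_left (nhdsWithin_mono 1 (fun x hx => ne_of_gt hx))
  have := hsub.neg
  rw [show -(1-ι) = ι - 1 by ring] at this
  refine this.congr' ?_
  filter_upwards [self_mem_nhdsWithin] with l hl
  have hl1 : l - 1 ≠ 0 := ne_of_gt (by simpa using sub_pos.2 (Set.mem_Ioi.1 hl))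
  simp only [slope, vsub_eq_sub, Real.one_rpow]
  field_simp
  rw [smul_eq_mul, ← mul_assoc, mul_one_div_cancel hl1, one_mul]; ring

lemma kar_ub {Fbar : ℝ → ℝ} {ι : ℝ} (hι : 1 < ι) (hpos : ∀ x, 0 < Fbar x)
    (hanti : Antitone Fbar) (hInt : ∀ b : ℝ, IntegrableOn Fbar (Set.Ioi b))
    (hRV : ∀ s > 0, Tendsto (fun x => Fbar (s * x) / Fbar x) atTop (nhds (s ^ (-ι))))
    {c : ℝ} (hc : 1/(ι-1) < c) :
    ∀ᶠ b in atTop, Gt Fbar b / (b * Fbar b) < c := by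
  have hβ : 0 < ι - 1 := by linarith
  have hφ : Tendsto (fun l : ℝ => ((1 - l ^ (1-ι)) / (l - 1))⁻¹)
      (nhdsWithin 1 (Set.Ioi 1)) (nhds (1/(ι-1))) := by
    have := (phi_tendsto hι).inv₀ (ne_of_gt hβ)
    simpa [one_div] using this
  obtain ⟨l, hl, hlmem⟩ := ((hφ.eventually_lt_const hc).and self_mem_nhdsWithin).exists
  have hl1 : (1:ℝ) < l := hlmem
  have hpow : l ^ ((1:ℝ)-ι) < 1 := Real.rpow_lt_one_of_one_lt_of_neg hl1 (by linarith)
  have hlpos : (0:ℝ) < l := by linarith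
  have hnum : (0:ℝ) < l - 1 := by linarith
  have hφl : (l - 1) / (1 - l ^ ((1:ℝ)-ι)) < c := by rwa [inv_div] at hl
  have hden0 : (1:ℝ) - l * l ^ (-ι) = 1 - l ^ ((1:ℝ)-ι) := by
    rw [show (1:ℝ)-ι = 1 + (-ι) by ring, Real.rpow_add hlpos, Real.rpow_one]
  have hcont : Tendsto (fun e : ℝ => (l-1) / (1 - l * (l ^ (-ι) + e)))
      (nhdsWithin 0 (Set.Ioi 0)) (nhds ((l-1) / (1 - l ^ ((1:ℝ)-ι)))) := by
    have hC : ContinuousAt (fun e : ℝ => (l-1) / (1 - l * (l ^ (-ι) + e))) 0 := by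
      apply ContinuousAt.div continuousAt_const (by fun_prop)
      simp only [add_zero, hden0]; linarith
    have h0 : (l-1) / (1 - l * (l ^ (-ι) + 0)) = (l-1) / (1 - l ^ ((1:ℝ)-ι)) := by
      rw [add_zero, hden0]
    exact h0 ▸ (hC.tendsto.mono_left nhdsWithin_le_nhds)
  have hcont2 : Tendsto (fun e : ℝ => 1 - l * (l ^ (-ι) + e)) (nhdsWithin 0 (Set.Ioi 0))
      (nhds (1 - l ^ ((1:ℝ)-ι))) := by
    have hC : ContinuousAt (fun e : ℝ => 1 - l * (l ^ (-ι) + e)) 0 := by fun_prop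
    have h0 : 1 - l * (l ^ (-ι) + 0) = 1 - l ^ ((1:ℝ)-ι) := by rw [add_zero, hden0]
    exact h0 ▸ (hC.tendsto.mono_left nhdsWithin_le_nhds)
  have hev := (hcont.eventually_lt_const hφl).and
    ((hcont2.eventually_const_lt (show (0:ℝ) < 1 - l ^ ((1:ℝ)-ι) by linarith)).and
      self_mem_nhdsWithin)
  obtain ⟨e, hψ, hden, he0⟩ : ∃ e : ℝ, (l-1) / (1 - l * (l ^ (-ι) + e)) < c ∧
      0 < 1 - l * (l ^ (-ι) + e) ∧ 0 < e := by
    obtain ⟨e, h1, h2, h3⟩ := hev.exists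
    exact ⟨e, h1, h2, h3⟩
  set q : ℝ := l ^ (-ι) + e with hq_def
  have hq0 : 0 < q := add_pos (Real.rpow_pos_of_pos hlpos _) he0
  have hlq : l * q < 1 := by linarith
  have hlq0 : 0 < l * q := mul_pos hlpos hq0
  -- eventual ratio bound
  have hratio : ∀ᶠ x in atTop, Fbar (l * x) / Fbar x < q :=
    (hRV l hlpos).eventually_lt_const (by simpa [hq_def] using he0)
  obtain ⟨B, hB⟩ := eventually_atTop.1 hratio
  set B' : ℝ := max B 1 with hB'_def
  have hB'1 : (1:ℝ) ≤ B' := le_max_right _ _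
  -- chain bound
  have hchain : ∀ x, B' ≤ x → ∀ k : ℕ, Fbar (l ^ k * x) ≤ q ^ k * Fbar x := by
    intro x hx
    have hx1 : (1:ℝ) ≤ x := le_trans hB'1 hx
    intro k
    induction k with
    | zero => simp
    | succ k ih =>
      have hxk : x ≤ l ^ k * x := le_mul_of_one_le_left (by linarith) (one_le_pow₀ hl1.le)
      have hBk : B ≤ l ^ k * x := le_trans (le_trans (le_max_left B 1) hx) hxk
      have h1 : Fbar (l * (l ^ k * x)) / Fbar (l ^ k * x) < q := hB _ hBk
      have h2 : Fbar (l * (l ^ k * x)) ≤ q * Fbar (l ^ k * x) :=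
        (div_lt_iff₀ (hpos _)).1 h1 |>.le
      have h3 : l ^ (k+1) * x = l * (l ^ k * x) := by ring
      rw [h3, pow_succ]
      calc Fbar (l * (l ^ k * x)) ≤ q * Fbar (l ^ k * x) := h2
        _ ≤ q * (q ^ k * Fbar x) := by nlinarith [hpos (l ^ k * x)]
        _ = q ^ k * q * Fbar x := by ring
  -- partial sums bound
  have hpartial : ∀ x, B' ≤ x → ∀ N : ℕ,
      Gt Fbar x ≤ (l-1) * x * Fbar x * (∑ k ∈ Finset.range N, (l*q)^k) + Gt Fbar (l ^ N * x) := by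
    intro x hx N
    have hx1 : (1:ℝ) ≤ x := le_trans hB'1 hx
    induction N with
    | zero => simp
    | succ N ih =>
      have hstep : l ^ N * x ≤ l ^ (N+1) * x := by
        have : l ^ N ≤ l ^ (N+1) := pow_le_pow_right₀ hl1.le (by omega)
        nlinarith
      have hsplit := G_split hInt hstep
      have hslab : (∫ s in Set.Ioc (l ^ N * x) (l ^ (N+1) * x), Fbar s)
          ≤ (l ^ (N+1) * x - l ^ N * x) * Fbar (l ^ N * x) := slab_le hanti hInt hstep
      have hF : Fbar (l ^ N * x) ≤ q ^ N * Fbar x := hchain x hx N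
      have hcoef : l ^ (N+1) * x - l ^ N * x = (l - 1) * (l ^ N * x) := by ring
      have h4 : Gt Fbar (l ^ N * x) ≤ (l-1) * x * Fbar x * (l*q)^N + Gt Fbar (l ^ (N+1) * x) := by
        rw [hsplit]
        rw [hcoef] at hslab
        have hq' : (l - 1) * (l ^ N * x) * Fbar (l ^ N * x)
            ≤ (l-1) * x * Fbar x * (l*q)^N := by
          rw [mul_pow]
          have hlN : (0:ℝ) < l ^ N := pow_pos hlpos N
          nlinarith [hpos (l ^ N * x), pow_pos hq0 N]
        linarith
      rw [Finset.sum_range_succ]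
      nlinarith
  -- take N → ∞
  have hbound : ∀ x, B' ≤ x → Gt Fbar x ≤ (l-1) * x * Fbar x * (1 - l*q)⁻¹ := by
    intro x hx
    have hx1 : (1:ℝ) ≤ x := le_trans hB'1 hx
    have hsum : Tendsto (fun N => ∑ k ∈ Finset.range N, (l*q)^k) atTop (nhds (1 - l*q)⁻¹) :=
      (hasSum_geometric_of_lt_one hlq0.le hlq).tendsto_sum_nat
    have hGN : Tendsto (fun N : ℕ => Gt Fbar (l ^ N * x)) atTop (nhds 0) := by
      apply (G_tendsto hpos hInt).comp
      exact (tendsto_pow_atTop_atTop_of_one_lt hl1).atTop_mul_const (by linarith)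
    have hRHS : Tendsto (fun N : ℕ =>
        (l-1) * x * Fbar x * (∑ k ∈ Finset.range N, (l*q)^k) + Gt Fbar (l ^ N * x)) atTop
        (nhds ((l-1) * x * Fbar x * (1 - l*q)⁻¹ + 0)) :=
      ((hsum.const_mul _).add hGN)
    rw [add_zero] at hRHS
    exact ge_of_tendsto hRHS (Filter.Eventually.of_forall (hpartial x hx))
  filter_upwards [eventually_ge_atTop B'] with x hx
  have hx1 : (1:ℝ) ≤ x := le_trans hB'1 hx
  have hxF : 0 < x * Fbar x := mul_pos (by linarith) (hpos x)
  rw [div_lt_iff₀ hxF]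
  calc Gt Fbar x ≤ (l-1) * x * Fbar x * (1 - l*q)⁻¹ := hbound x hx
    _ = ((l-1) / (1 - l * q)) * (x * Fbar x) := by field_simp
    _ < c * (x * Fbar x) := by
        apply mul_lt_mul_of_pos_right _ hxF
        exact hψ

lemma kar_lb {Fbar : ℝ → ℝ} {ι : ℝ} (hι : 1 < ι) (hpos : ∀ x, 0 < Fbar x)
    (hanti : Antitone Fbar) (hInt : ∀ b : ℝ, IntegrableOn Fbar (Set.Ioi b))
    (hRV : ∀ s > 0, Tendsto (fun x => Fbar (s * x) / Fbar x) atTop (nhds (s ^ (-ι))))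
    {c : ℝ} (hc : c < 1/(ι-1)) :
    ∀ᶠ b in atTop, c < Gt Fbar b / (b * Fbar b) := by
  have hβ : 0 < ι - 1 := by linarith
  have hφ : Tendsto (fun l : ℝ => ((1 - l ^ (1-ι)) / (l - 1))⁻¹)
      (nhdsWithin 1 (Set.Ioi 1)) (nhds (1/(ι-1))) := by
    have := (phi_tendsto hι).inv₀ (ne_of_gt hβ)
    simpa [one_div] using this
  have hrpow : Tendsto (fun l : ℝ => l ^ (-ι)) (nhdsWithin 1 (Set.Ioi 1)) (nhds 1) := by
    have hC : ContinuousAt (fun l : ℝ => l ^ (-ι)) 1 :=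
      Real.continuousAt_rpow_const 1 (-ι) (Or.inl one_ne_zero)
    have := hC.tendsto.mono_left (nhdsWithin_le_nhds (s := Set.Ioi 1))
    simpa [Real.one_rpow] using this
  have hψl : Tendsto (fun l : ℝ => l ^ (-ι) * ((1 - l ^ (1-ι)) / (l - 1))⁻¹)
      (nhdsWithin 1 (Set.Ioi 1)) (nhds (1/(ι-1))) := by
    have := hrpow.mul hφ
    simpa using this
  obtain ⟨l, hl, hlmem⟩ := ((hψl.eventually_const_lt hc).and self_mem_nhdsWithin).exists
  have hl1 : (1:ℝ) < l := hlmem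
  have hpow : l ^ ((1:ℝ)-ι) < 1 := Real.rpow_lt_one_of_one_lt_of_neg hl1 (by linarith)
  have hlpos : (0:ℝ) < l := by linarith
  have hnum : (0:ℝ) < l - 1 := by linarith
  have hφl : c < l ^ (-ι) * ((l - 1) / (1 - l ^ ((1:ℝ)-ι))) := by rwa [inv_div] at hl
  have hden0 : (1:ℝ) - l * l ^ (-ι) = 1 - l ^ ((1:ℝ)-ι) := by
    rw [show (1:ℝ)-ι = 1 + (-ι) by ring, Real.rpow_add hlpos, Real.rpow_one]
  have hcont : Tendsto (fun e : ℝ => (l-1) * (l ^ (-ι) - e) / (1 - l * (l ^ (-ι) - e)))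
      (nhdsWithin 0 (Set.Ioi 0)) (nhds (l ^ (-ι) * ((l - 1) / (1 - l ^ ((1:ℝ)-ι))))) := by
    have hC : ContinuousAt (fun e : ℝ => (l-1) * (l ^ (-ι) - e) / (1 - l * (l ^ (-ι) - e))) 0 := by
      apply ContinuousAt.div (by fun_prop) (by fun_prop)
      simp only [sub_zero, hden0]; linarith
    have h0 : (l-1) * (l ^ (-ι) - 0) / (1 - l * (l ^ (-ι) - 0))
        = l ^ (-ι) * ((l - 1) / (1 - l ^ ((1:ℝ)-ι))) := by
      rw [sub_zero, hden0]; ring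
    exact h0 ▸ (hC.tendsto.mono_left nhdsWithin_le_nhds)
  obtain ⟨e, hψ, hp0, he0⟩ : ∃ e : ℝ, c < (l-1) * (l ^ (-ι) - e) / (1 - l * (l ^ (-ι) - e)) ∧
      0 < l ^ (-ι) - e ∧ 0 < e := by
    have hev := (hcont.eventually_const_lt hφl).and
      ((((continuousAt_const.sub continuousAt_id).tendsto.mono_left
          (nhdsWithin_le_nhds (s := Set.Ioi 0)) :
        Tendsto (fun e : ℝ => l ^ (-ι) - e) (nhdsWithin 0 (Set.Ioi 0))
          (nhds (l ^ (-ι) - 0))).eventually_const_lt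
        (show (0:ℝ) < l ^ (-ι) - 0 by rw [sub_zero]; exact Real.rpow_pos_of_pos hlpos _)).and
        self_mem_nhdsWithin)
    obtain ⟨e, h1, h2, h3⟩ := hev.exists
    exact ⟨e, h1, h2, h3⟩
  set p : ℝ := l ^ (-ι) - e with hp_def
  have hlp : l * p < 1 := by
    have : l * p < l * l ^ (-ι) := by nlinarith
    linarith
  have hlp0 : 0 < l * p := mul_pos hlpos hp0
  have hden : 0 < 1 - l * p := by linarith
  have hratio : ∀ᶠ x in atTop, p < Fbar (l * x) / Fbar x :=
    (hRV l hlpos).eventually_const_lt (by simpa [hp_def] using he0)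
  obtain ⟨B, hB⟩ := eventually_atTop.1 hratio
  set B' : ℝ := max B 1 with hB'_def
  have hB'1 : (1:ℝ) ≤ B' := le_max_right _ _
  have hchain : ∀ x, B' ≤ x → ∀ k : ℕ, p ^ k * Fbar (l * x) ≤ Fbar (l ^ (k+1) * x) := by
    intro x hx
    have hx1 : (1:ℝ) ≤ x := le_trans hB'1 hx
    intro k
    induction k with
    | zero => simp [pow_one]
    | succ k ih =>
      have hxk : x ≤ l ^ (k+1) * x := le_mul_of_one_le_left (by linarith) (one_le_pow₀ hl1.le)
      have hBk : B ≤ l ^ (k+1) * x := le_trans (le_trans (le_max_left B 1) hx) hxk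
      have h1 : p < Fbar (l * (l ^ (k+1) * x)) / Fbar (l ^ (k+1) * x) := hB _ hBk
      have h2 : p * Fbar (l ^ (k+1) * x) ≤ Fbar (l * (l ^ (k+1) * x)) :=
        ((lt_div_iff₀ (hpos _)).1 h1).le
      have h3 : l ^ (k+2) * x = l * (l ^ (k+1) * x) := by ring
      rw [h3, pow_succ]
      calc p ^ k * p * Fbar (l * x) = p * (p ^ k * Fbar (l * x)) := by ring
        _ ≤ p * Fbar (l ^ (k+1) * x) := by nlinarith
        _ ≤ Fbar (l * (l ^ (k+1) * x)) := h2
  have hpartial : ∀ x, B' ≤ x → ∀ N : ℕ,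
      (l-1) * x * Fbar (l * x) * (∑ k ∈ Finset.range N, (l*p)^k) + Gt Fbar (l ^ N * x)
        ≤ Gt Fbar x := by
    intro x hx N
    have hx1 : (1:ℝ) ≤ x := le_trans hB'1 hx
    induction N with
    | zero => simp
    | succ N ih =>
      have hstep : l ^ N * x ≤ l ^ (N+1) * x := by
        have : l ^ N ≤ l ^ (N+1) := pow_le_pow_right₀ hl1.le (by omega)
        nlinarith
      have hsplit := G_split hInt hstep
      have hslab : (l ^ (N+1) * x - l ^ N * x) * Fbar (l ^ (N+1) * x)
          ≤ ∫ s in Set.Ioc (l ^ N * x) (l ^ (N+1) * x), Fbar s := le_slab hanti hInt hstep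
      have hF : p ^ N * Fbar (l * x) ≤ Fbar (l ^ (N+1) * x) := hchain x hx N
      have hcoef : l ^ (N+1) * x - l ^ N * x = (l - 1) * (l ^ N * x) := by ring
      rw [hcoef] at hslab
      have hq' : (l-1) * x * Fbar (l * x) * (l*p)^N
          ≤ (l - 1) * (l ^ N * x) * Fbar (l ^ (N+1) * x) := by
        rw [mul_pow]
        have hlN : (0:ℝ) < l ^ N := pow_pos hlpos N
        nlinarith [pow_pos hp0 N, hpos (l * x)]
      have h4 : (l-1) * x * Fbar (l * x) * (l*p)^N + Gt Fbar (l ^ (N+1) * x)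
          ≤ Gt Fbar (l ^ N * x) := by
        rw [hsplit]; linarith
      rw [Finset.sum_range_succ]
      linarith
  have hbound : ∀ x, B' ≤ x → (l-1) * x * Fbar (l * x) * (1 - l*p)⁻¹ ≤ Gt Fbar x := by
    intro x hx
    have hsum : Tendsto (fun N => ∑ k ∈ Finset.range N, (l*p)^k) atTop (nhds (1 - l*p)⁻¹) :=
      (hasSum_geometric_of_lt_one hlp0.le hlp).tendsto_sum_nat
    have hGN : Tendsto (fun N : ℕ => Gt Fbar (l ^ N * x)) atTop (nhds 0) := by
      apply (G_tendsto hpos hInt).comp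
      exact (tendsto_pow_atTop_atTop_of_one_lt hl1).atTop_mul_const
        (by linarith [le_trans hB'1 hx])
    have hRHS : Tendsto (fun N : ℕ =>
        (l-1) * x * Fbar (l * x) * (∑ k ∈ Finset.range N, (l*p)^k) + Gt Fbar (l ^ N * x)) atTop
        (nhds ((l-1) * x * Fbar (l * x) * (1 - l*p)⁻¹ + 0)) :=
      ((hsum.const_mul _).add hGN)
    rw [add_zero] at hRHS
    exact le_of_tendsto hRHS (Filter.Eventually.of_forall (hpartial x hx))
  filter_upwards [eventually_ge_atTop B'] with x hx
  have hx1 : (1:ℝ) ≤ x := le_trans hB'1 hx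
  have hxF : 0 < x * Fbar x := mul_pos (by linarith) (hpos x)
  rw [lt_div_iff₀ hxF]
  have hFl : p * Fbar x ≤ Fbar (l * x) :=
    ((lt_div_iff₀ (hpos _)).1 (hB x (le_trans (le_max_left B 1) hx))).le
  have h5 : (l-1) * x * (p * Fbar x) * (1 - l*p)⁻¹ ≤ (l-1) * x * Fbar (l * x) * (1 - l*p)⁻¹ := by
    have h6 : (0:ℝ) < (1 - l*p)⁻¹ := by positivity
    have h7 : (0:ℝ) ≤ (l-1) * x := by nlinarith
    exact mul_le_mul_of_nonneg_right (mul_le_mul_of_nonneg_left hFl h7) h6.le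
  calc c * (x * Fbar x) < ((l-1) * p / (1 - l*p)) * (x * Fbar x) := by
        apply mul_lt_mul_of_pos_right _ hxF
        have : (l-1) * (l ^ (-ι) - e) / (1 - l * (l ^ (-ι) - e)) = (l-1) * p / (1 - l*p) := rfl
        linarith [hψ]
    _ = (l-1) * x * (p * Fbar x) * (1 - l*p)⁻¹ := by field_simp
    _ ≤ (l-1) * x * Fbar (l * x) * (1 - l*p)⁻¹ := h5
    _ ≤ Gt Fbar x := hbound x hx

lemma karamata {Fbar : ℝ → ℝ} {ι : ℝ} (hι : 1 < ι) (hpos : ∀ x, 0 < Fbar x)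
    (hanti : Antitone Fbar) (hInt : ∀ b : ℝ, IntegrableOn Fbar (Set.Ioi b))
    (hRV : ∀ s > 0, Tendsto (fun x => Fbar (s * x) / Fbar x) atTop (nhds (s ^ (-ι)))) :
    Tendsto (fun b => Gt Fbar b / (b * Fbar b)) atTop (nhds (1/(ι-1))) :=
  tendsto_order.2 ⟨fun _ hc => kar_lb hι hpos hanti hInt hRV hc,
    fun _ hc => kar_ub hι hpos hanti hInt hRV hc⟩

lemma G_rv {Fbar : ℝ → ℝ} {ι : ℝ} (hι : 1 < ι) (hpos : ∀ x, 0 < Fbar x)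
    (hanti : Antitone Fbar) (hInt : ∀ b : ℝ, IntegrableOn Fbar (Set.Ioi b))
    (hRV : ∀ s > 0, Tendsto (fun x => Fbar (s * x) / Fbar x) atTop (nhds (s ^ (-ι))))
    {l : ℝ} (hl : 0 < l) :
    Tendsto (fun b => Gt Fbar (l * b) / Gt Fbar b) atTop (nhds (l ^ ((1:ℝ)-ι))) := by
  have hβ : 0 < ι - 1 := by linarith
  have hkar := karamata hι hpos hanti hInt hRV
  have hinv : Tendsto (fun b => b * Fbar b / Gt Fbar b) atTop (nhds (ι-1)) := by
    have := hkar.inv₀ (by positivity)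
    simp only [inv_div] at this ⊢
    convert this using 2
    rw [div_one]
  have hcomp : Tendsto (fun b => Gt Fbar (l * b) / (l * b * Fbar (l * b))) atTop
      (nhds (1/(ι-1))) :=
    hkar.comp (tendsto_id.const_mul_atTop hl)
  have hprod : Tendsto (fun b => (Gt Fbar (l * b) / (l * b * Fbar (l * b)))
      * (l * (Fbar (l * b) / Fbar b)) * (b * Fbar b / Gt Fbar b)) atTop
      (nhds ((1/(ι-1)) * (l * l ^ (-ι)) * (ι-1))) :=
    (hcomp.mul ((hRV l hl).const_mul l)).mul hinv
  have hval : (1/(ι-1)) * (l * l ^ (-ι)) * (ι-1) = l ^ ((1:ℝ)-ι) := by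
    rw [show (1:ℝ)-ι = 1 + (-ι) by ring, Real.rpow_add hl, Real.rpow_one]
    field_simp
  rw [hval] at hprod
  refine hprod.congr' ?_
  filter_upwards [eventually_gt_atTop (0:ℝ)] with b hb
  have h1 : Fbar (l * b) ≠ 0 := ne_of_gt (hpos _)
  have h2 : Fbar b ≠ 0 := ne_of_gt (hpos _)
  have h3 : Gt Fbar b ≠ 0 := ne_of_gt (G_pos hpos hanti hInt b)
  field_simp

lemma G_gen {Fbar : ℝ → ℝ} {ι : ℝ} (hι : 1 < ι) (hpos : ∀ x, 0 < Fbar x)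
    (hanti : Antitone Fbar) (hInt : ∀ b : ℝ, IntegrableOn Fbar (Set.Ioi b))
    (hRV : ∀ s > 0, Tendsto (fun x => Fbar (s * x) / Fbar x) atTop (nhds (s ^ (-ι))))
    {L : ℝ} (hL : 0 < L) {cf : ℝ → ℝ} (hcf : Tendsto (fun b => cf b / b) atTop (nhds L)) :
    Tendsto (fun b => Gt Fbar (cf b) / Gt Fbar b) atTop (nhds (L ^ ((1:ℝ)-ι))) := by
  rw [tendsto_order]
  constructor
  · intro r hr
    have hcont : Tendsto (fun e : ℝ => (L+e) ^ ((1:ℝ)-ι)) (nhdsWithin 0 (Set.Ioi 0))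
        (nhds (L ^ ((1:ℝ)-ι))) := by
      have hC : ContinuousAt (fun e : ℝ => (L+e) ^ ((1:ℝ)-ι)) 0 := by
        apply ContinuousAt.rpow_const (by fun_prop)
        left; simp only [add_zero]; exact ne_of_gt hL
      have := hC.tendsto.mono_left (nhdsWithin_le_nhds (s := Set.Ioi 0))
      simpa using this
    obtain ⟨e, hre, he0⟩ := ((hcont.eventually_const_lt hr).and self_mem_nhdsWithin).exists
    have he0' : (0:ℝ) < e := he0
    have h1 : ∀ᶠ b : ℝ in atTop, cf b ≤ (L+e) * b := by
      filter_upwards [hcf.eventually_lt_const (show L < L + e by linarith),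
        eventually_gt_atTop (0:ℝ)] with b hb1 hb0
      exact ((div_lt_iff₀ hb0).1 hb1).le
    have h3 := (G_rv hι hpos hanti hInt hRV (show (0:ℝ) < L + e by linarith)).eventually_const_lt
      hre
    filter_upwards [h1, h3] with b hb1 hb3
    calc r < Gt Fbar ((L+e) * b) / Gt Fbar b := hb3
      _ ≤ Gt Fbar (cf b) / Gt Fbar b := by
          gcongr
          · exact (G_pos hpos hanti hInt b).le
          · exact G_anti hpos hanti hInt hb1
  · intro r hr
    have hcont : Tendsto (fun e : ℝ => (L-e) ^ ((1:ℝ)-ι)) (nhdsWithin 0 (Set.Ioi 0))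
        (nhds (L ^ ((1:ℝ)-ι))) := by
      have hC : ContinuousAt (fun e : ℝ => (L-e) ^ ((1:ℝ)-ι)) 0 := by
        apply ContinuousAt.rpow_const (by fun_prop)
        left; simp only [sub_zero]; exact ne_of_gt hL
      have := hC.tendsto.mono_left (nhdsWithin_le_nhds (s := Set.Ioi 0))
      simpa using this
    have hLe : Tendsto (fun e : ℝ => L - e) (nhdsWithin 0 (Set.Ioi 0)) (nhds L) := by
      have hC : ContinuousAt (fun e : ℝ => L - e) 0 := by fun_prop
      have := hC.tendsto.mono_left (nhdsWithin_le_nhds (s := Set.Ioi 0))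
      simpa using this
    obtain ⟨e, hre, hLe', he0⟩ : ∃ e : ℝ, (L-e) ^ ((1:ℝ)-ι) < r ∧ 0 < L - e ∧ e ∈ Set.Ioi (0:ℝ) := by
      obtain ⟨e, ⟨h1, h2⟩, h3⟩ := (((hcont.eventually_lt_const hr).and
        (hLe.eventually_const_lt (show (0:ℝ) < L by linarith))).and self_mem_nhdsWithin).exists
      exact ⟨e, h1, h2, h3⟩
    have he0' : (0:ℝ) < e := he0
    have h1 : ∀ᶠ b : ℝ in atTop, (L-e) * b ≤ cf b := by
      filter_upwards [hcf.eventually_const_lt (show L - e < L by linarith),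
        eventually_gt_atTop (0:ℝ)] with b hb1 hb0
      exact ((lt_div_iff₀ hb0).1 hb1).le
    have h3 := (G_rv hι hpos hanti hInt hRV hLe').eventually_lt_const hre
    filter_upwards [h1, h3] with b hb1 hb3
    calc Gt Fbar (cf b) / Gt Fbar b ≤ Gt Fbar ((L-e) * b) / Gt Fbar b := by
          gcongr
          · exact (G_pos hpos hanti hInt b).le
          · exact G_anti hpos hanti hInt hb1
      _ < r := hb3

lemma bound_A {Fbar : ℝ → ℝ} (hpos : ∀ x, 0 < Fbar x) (hanti : Antitone Fbar)
    (hInt : ∀ b : ℝ, IntegrableOn Fbar (Set.Ioi b)) {m : ℝ} (hm : 0 < m) (x : ℝ) :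
    (Real.log (Gt Fbar x) - Real.log (Gt Fbar (x+m))) * (Gt Fbar (x+m) / Gt Fbar x)
      ≤ m * (Fbar x / Gt Fbar x) := by
  have hu : 0 < Gt Fbar x := G_pos hpos hanti hInt x
  have hv : 0 < Gt Fbar (x+m) := G_pos hpos hanti hInt (x+m)
  have hxm : x ≤ x + m := by linarith
  have hsplit := G_split hInt hxm
  have hslab : (∫ s in Set.Ioc x (x+m), Fbar s) ≤ m * Fbar x := by
    have := slab_le hanti hInt hxm
    calc (∫ s in Set.Ioc x (x+m), Fbar s) ≤ (x + m - x) * Fbar x := this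
      _ = m * Fbar x := by ring
  have hdiff : Gt Fbar x - Gt Fbar (x+m) ≤ m * Fbar x := by linarith
  have hlog : Real.log (Gt Fbar x) - Real.log (Gt Fbar (x+m))
      ≤ (Gt Fbar x - Gt Fbar (x+m)) / Gt Fbar (x+m) := by
    rw [← Real.log_div (ne_of_gt hu) (ne_of_gt hv)]
    have h1 := Real.log_le_sub_one_of_pos (show 0 < Gt Fbar x / Gt Fbar (x+m) by positivity)
    calc Real.log (Gt Fbar x / Gt Fbar (x+m)) ≤ Gt Fbar x / Gt Fbar (x+m) - 1 := h1
      _ = (Gt Fbar x - Gt Fbar (x+m)) / Gt Fbar (x+m) := by field_simp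
  calc (Real.log (Gt Fbar x) - Real.log (Gt Fbar (x+m))) * (Gt Fbar (x+m) / Gt Fbar x)
      ≤ ((Gt Fbar x - Gt Fbar (x+m)) / Gt Fbar (x+m)) * (Gt Fbar (x+m) / Gt Fbar x) :=
        mul_le_mul_of_nonneg_right hlog (by positivity)
    _ = (Gt Fbar x - Gt Fbar (x+m)) / Gt Fbar x := by field_simp
    _ ≤ (m * Fbar x) / Gt Fbar x := by gcongr
    _ = m * (Fbar x / Gt Fbar x) := by ring

lemma bound_B {Fbar : ℝ → ℝ} (hpos : ∀ x, 0 < Fbar x) (hanti : Antitone Fbar)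
    (hInt : ∀ b : ℝ, IntegrableOn Fbar (Set.Ioi b)) {m : ℝ} (hm : 0 < m) (x : ℝ) :
    m * (Fbar (x+m) / Gt Fbar (x+m))
      ≤ (Real.log (Gt Fbar x) - Real.log (Gt Fbar (x+m))) * (Gt Fbar x / Gt Fbar (x+m)) := by
  have hu : 0 < Gt Fbar x := G_pos hpos hanti hInt x
  have hv : 0 < Gt Fbar (x+m) := G_pos hpos hanti hInt (x+m)
  have hxm : x ≤ x + m := by linarith
  have hsplit := G_split hInt hxm
  have hslab : m * Fbar (x+m) ≤ ∫ s in Set.Ioc x (x+m), Fbar s := by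
    have := le_slab hanti hInt hxm
    calc m * Fbar (x+m) = (x + m - x) * Fbar (x+m) := by ring
      _ ≤ ∫ s in Set.Ioc x (x+m), Fbar s := this
  have hdiff : m * Fbar (x+m) ≤ Gt Fbar x - Gt Fbar (x+m) := by linarith
  have hlog : (Gt Fbar x - Gt Fbar (x+m)) / Gt Fbar x
      ≤ Real.log (Gt Fbar x) - Real.log (Gt Fbar (x+m)) := by
    have h0 : Real.log (Gt Fbar x) - Real.log (Gt Fbar (x+m))
        = -(Real.log (Gt Fbar (x+m) / Gt Fbar x)) := by
      rw [Real.log_div (ne_of_gt hv) (ne_of_gt hu)]; ring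
    rw [h0]
    have h1 := Real.log_le_sub_one_of_pos (show 0 < Gt Fbar (x+m) / Gt Fbar x by positivity)
    have h2 : (Gt Fbar x - Gt Fbar (x+m)) / Gt Fbar x = -(Gt Fbar (x+m) / Gt Fbar x - 1) := by
      field_simp
      ring
    rw [h2]
    linarith
  calc m * (Fbar (x+m) / Gt Fbar (x+m))
      = (m * Fbar (x+m) / Gt Fbar x) * (Gt Fbar x / Gt Fbar (x+m)) := by field_simp
    _ ≤ ((Gt Fbar x - Gt Fbar (x+m)) / Gt Fbar x) * (Gt Fbar x / Gt Fbar (x+m)) := by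
        apply mul_le_mul_of_nonneg_right _ (by positivity)
        gcongr
    _ ≤ (Real.log (Gt Fbar x) - Real.log (Gt Fbar (x+m))) * (Gt Fbar x / Gt Fbar (x+m)) :=
        mul_le_mul_of_nonneg_right hlog (by positivity)

/-- Riemann-sum limit for the coupling time (regularly varying case): with
`a(b) = G(b)/F̄(b)`,
`Σ_{j=0}^{⌊t a(b)⌋} 2θ F̄(b+j|μ|)/G(b+j|μ|) → (2θ(ι-1)/|μ|) log(1+|μ|t/(ι-1))`. -/
theorem stmt18 (Fbar : ℝ → ℝ) (ι θ μr t : ℝ) (hι : 1 < ι) (hθ : 0 < θ)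
    (hμ : μr ≠ 0) (ht : 0 ≤ t)
    (hpos : ∀ x, 0 < Fbar x) (hanti : Antitone Fbar)
    (hInt : ∀ b : ℝ, IntegrableOn Fbar (Set.Ioi b))
    (hRV : ∀ s > 0, Tendsto (fun x => Fbar (s * x) / Fbar x) atTop
      (nhds (s ^ (-ι)))) :
    Tendsto (fun b =>
        ∑ j ∈ Finset.range (⌊t * ((∫ s in Set.Ioi b, Fbar s) / Fbar b)⌋₊ + 1),
          2 * θ * Fbar (b + (j : ℝ) * |μr|) /
            (∫ s in Set.Ioi (b + (j : ℝ) * |μr|), Fbar s))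
      atTop (nhds ((2 * θ * (ι - 1) / |μr|) * Real.log (1 + |μr| * t / (ι - 1)))) := by
  have hβ : 0 < ι - 1 := by linarith
  set m : ℝ := |μr| with hm_def
  have hm : 0 < m := abs_pos.2 hμ
  set Ls : ℝ := 1 + m * t / (ι - 1) with hLs_def
  have hLs1 : (1:ℝ) ≤ Ls := by
    have : 0 ≤ m * t / (ι - 1) := by positivity
    rw [hLs_def]; linarith
  have hLs0 : (0:ℝ) < Ls := by linarith
  set N : ℝ → ℕ := fun b => ⌊t * (Gt Fbar b / Fbar b)⌋₊ with hN_def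
  set T : ℝ := (ι - 1) * Real.log Ls with hT_def
  have hGpos : ∀ x, 0 < Gt Fbar x := G_pos hpos hanti hInt
  have hkar := karamata hι hpos hanti hInt hRV
  have hinv : Tendsto (fun b => b * Fbar b / Gt Fbar b) atTop (nhds (ι-1)) := by
    have := hkar.inv₀ (by positivity)
    simp only [inv_div] at this ⊢
    convert this using 2
    rw [div_one]
  have hone : Tendsto (fun b : ℝ => 1 / b) atTop (nhds 0) := by
    simpa [one_div] using (tendsto_inv_atTop_zero (𝕜 := ℝ))
  -- limit of N b / b
  have hy : Tendsto (fun b => t * (Gt Fbar b / Fbar b) / b) atTop (nhds (t / (ι-1))) := by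
    have heq : (fun b => t * (Gt Fbar b / Fbar b) / b)
        = fun b => t * (Gt Fbar b / (b * Fbar b)) := by
      funext b
      rw [mul_div_assoc, div_div, mul_comm (Fbar b) b]
    rw [heq, show t / (ι-1) = t * (1/(ι-1)) by rw [mul_one_div]]
    exact hkar.const_mul t
  have hNb : Tendsto (fun b => (N b : ℝ) / b) atTop (nhds (t/(ι-1))) := by
    have hlow : Tendsto (fun b => t * (Gt Fbar b / Fbar b) / b - 1 / b) atTop
        (nhds (t/(ι-1) - 0)) := hy.sub hone
    rw [sub_zero] at hlow
    refine tendsto_of_tendsto_of_tendsto_of_le_of_le' hlow hy ?_ ?_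
    · filter_upwards [eventually_gt_atTop (0:ℝ)] with b hb
      have h1 : t * (Gt Fbar b / Fbar b) - 1 ≤ (N b : ℝ) :=
        (Nat.sub_one_lt_floor _).le
      rw [← sub_div]
      gcongr
    · filter_upwards [eventually_gt_atTop (0:ℝ)] with b hb
      have h1 : (N b : ℝ) ≤ t * (Gt Fbar b / Fbar b) :=
        Nat.floor_le (mul_nonneg ht (div_nonneg (hGpos b).le (hpos b).le))
      gcongr
  -- limits of the shifted points
  have hc1 : Tendsto (fun b => (b + ((N b : ℝ) + 1) * m) / b) atTop (nhds Ls) := by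
    have hcombo : Tendsto (fun b => 1 + m * ((N b : ℝ)/b) + m * (1/b)) atTop
        (nhds (1 + m * (t/(ι-1)) + m * 0)) :=
      (tendsto_const_nhds.add (hNb.const_mul m)).add (hone.const_mul m)
    have hval : 1 + m * (t/(ι-1)) + m * 0 = Ls := by
      rw [hLs_def, mul_div_assoc]; ring
    rw [hval] at hcombo
    refine hcombo.congr' ?_
    filter_upwards [eventually_gt_atTop (0:ℝ)] with b hb
    field_simp
    ring
  have hc0 : Tendsto (fun b => (b + (N b : ℝ) * m) / b) atTop (nhds Ls) := by
    have hcombo : Tendsto (fun b => 1 + m * ((N b : ℝ)/b) + m * (1/b)) atTop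
        (nhds (1 + m * (t/(ι-1)) + m * 0)) :=
      (tendsto_const_nhds.add (hNb.const_mul m)).add (hone.const_mul m)
    have hval : 1 + m * (t/(ι-1)) + m * 0 = Ls := by
      rw [hLs_def, mul_div_assoc]; ring
    rw [hval] at hcombo
    have hcombo2 : Tendsto (fun b => 1 + m * ((N b : ℝ)/b)) atTop
        (nhds (1 + m * (t/(ι-1)))) := tendsto_const_nhds.add (hNb.const_mul m)
    have hval2 : 1 + m * (t/(ι-1)) = Ls := by rw [hLs_def, mul_div_assoc]
    rw [hval2] at hcombo2
    refine hcombo2.congr' ?_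
    filter_upwards [eventually_gt_atTop (0:ℝ)] with b hb
    field_simp
  have hG1 := G_gen hι hpos hanti hInt hRV hLs0 hc1
  have hG0 := G_gen hι hpos hanti hInt hRV hLs0 hc0
  have hlog1 : Tendsto (fun b => Real.log (Gt Fbar b)
      - Real.log (Gt Fbar (b + ((N b : ℝ) + 1) * m))) atTop (nhds T) := by
    have hlg := (Real.continuousAt_log
      (ne_of_gt (Real.rpow_pos_of_pos hLs0 ((1:ℝ)-ι)))).tendsto.comp hG1
    have := hlg.neg
    rw [Real.log_rpow hLs0, show -((1-ι) * Real.log Ls) = T by rw [hT_def]; ring] at this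
    refine this.congr' ?_
    filter_upwards with b
    simp only [Function.comp]
    rw [Real.log_div (ne_of_gt (hGpos _)) (ne_of_gt (hGpos _))]
    ring
  have hlog0 : Tendsto (fun b => Real.log (Gt Fbar b)
      - Real.log (Gt Fbar (b + (N b : ℝ) * m))) atTop (nhds T) := by
    have hlg := (Real.continuousAt_log
      (ne_of_gt (Real.rpow_pos_of_pos hLs0 ((1:ℝ)-ι)))).tendsto.comp hG0
    have := hlg.neg
    rw [Real.log_rpow hLs0, show -((1-ι) * Real.log Ls) = T by rw [hT_def]; ring] at this
    refine this.congr' ?_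
    filter_upwards with b
    simp only [Function.comp]
    rw [Real.log_div (ne_of_gt (hGpos _)) (ne_of_gt (hGpos _))]
    ring
  have hshift1 : Tendsto (fun x => Gt Fbar x / Gt Fbar (x + m)) atTop (nhds 1) := by
    have hcf : Tendsto (fun x : ℝ => (x + m) / x) atTop (nhds 1) := by
      have hcombo : Tendsto (fun x : ℝ => 1 + m * (1/x)) atTop (nhds (1 + m * 0)) :=
        tendsto_const_nhds.add (hone.const_mul m)
      rw [show (1:ℝ) + m * 0 = 1 by ring] at hcombo
      refine hcombo.congr' ?_
      filter_upwards [eventually_gt_atTop (0:ℝ)] with x hx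
      field_simp
    have hsh := G_gen hι hpos hanti hInt hRV one_pos hcf
    rw [Real.one_rpow] at hsh
    have := hsh.inv₀ one_ne_zero
    rw [inv_one] at this
    refine this.congr ?_
    intro x
    rw [inv_div]
  have hh0 : Tendsto (fun b => m * (Fbar b / Gt Fbar b)) atTop (nhds 0) := by
    have hprod : Tendsto (fun b => (b * Fbar b / Gt Fbar b) * (1/b)) atTop
        (nhds ((ι-1) * 0)) := hinv.mul hone
    rw [mul_zero] at hprod
    have hfg : Tendsto (fun b => Fbar b / Gt Fbar b) atTop (nhds 0) := by
      refine hprod.congr' ?_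
      filter_upwards [eventually_gt_atTop (0:ℝ)] with b hb
      have hG : Gt Fbar b ≠ 0 := ne_of_gt (hGpos b)
      have hb' : b ≠ 0 := ne_of_gt hb
      field_simp
    have := hfg.const_mul m
    rwa [mul_zero] at this
  -- the rescaled sum converges to T
  have hcastm : ∀ (b : ℝ) (j : ℕ), b + (j:ℝ)*m + m = b + ((j+1 : ℕ):ℝ)*m := by
    intro b j; push_cast; ring
  have hSlim : Tendsto (fun b => ∑ j ∈ Finset.range (N b + 1),
      m * (Fbar (b + (j:ℝ)*m) / Gt Fbar (b + (j:ℝ)*m))) atTop (nhds T) := by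
    rw [tendsto_order]
    constructor
    · intro r hr
      have hq : Tendsto (fun e : ℝ => T / (1+e)) (nhdsWithin 0 (Set.Ioi 0)) (nhds T) := by
        have hC : ContinuousAt (fun e : ℝ => T / (1+e)) 0 :=
          ContinuousAt.div continuousAt_const (by fun_prop) (by norm_num)
        have := hC.tendsto.mono_left (nhdsWithin_le_nhds (s := Set.Ioi 0))
        simpa using this
      obtain ⟨ε, hrε, hε0⟩ := ((hq.eventually_const_lt hr).and self_mem_nhdsWithin).exists
      have hε0' : (0:ℝ) < ε := hε0
      obtain ⟨Bε, hBε⟩ := eventually_atTop.1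
        (hshift1.eventually_lt_const (show (1:ℝ) < 1 + ε by linarith))
      have hL1 := (hlog1.div_const (1+ε)).eventually_const_lt hrε
      filter_upwards [eventually_ge_atTop Bε, hL1] with b hb1 hb2
      refine lt_of_lt_of_le hb2 ?_
      have htel : Real.log (Gt Fbar b) - Real.log (Gt Fbar (b + ((N b:ℝ)+1)*m))
          = ∑ j ∈ Finset.range (N b + 1),
            (Real.log (Gt Fbar (b + (j:ℝ)*m)) - Real.log (Gt Fbar (b + (j:ℝ)*m + m))) := by
        have h2 : ∑ j ∈ Finset.range (N b + 1),
            (Real.log (Gt Fbar (b + (j:ℝ)*m)) - Real.log (Gt Fbar (b + (j:ℝ)*m + m)))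
            = ∑ j ∈ Finset.range (N b + 1),
              ((fun j : ℕ => Real.log (Gt Fbar (b + (j:ℝ)*m))) j
                - (fun j : ℕ => Real.log (Gt Fbar (b + (j:ℝ)*m))) (j + 1)) := by
          refine Finset.sum_congr rfl (fun j _ => ?_)
          simp only []
          rw [hcastm b j]
        rw [h2, Finset.sum_range_sub' (fun j : ℕ => Real.log (Gt Fbar (b + (j:ℝ)*m)))]
        push_cast
        norm_num
      rw [htel, Finset.sum_div]
      refine Finset.sum_le_sum (fun j _ => ?_)
      set x : ℝ := b + (j:ℝ)*m with hx_def
      have hxB : Bε ≤ x := by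
        have : 0 ≤ (j:ℝ)*m := by positivity
        rw [hx_def]; linarith
      have hratio := hBε x hxB
      have hld : 0 ≤ Real.log (Gt Fbar x) - Real.log (Gt Fbar (x+m)) := by
        have hle : Gt Fbar (x+m) ≤ Gt Fbar x :=
          G_anti hpos hanti hInt (by linarith : x ≤ x + m)
        have := Real.log_le_log (hGpos (x+m)) hle
        linarith
      have hcmp : (1+ε)⁻¹ ≤ Gt Fbar (x+m) / Gt Fbar x := by
        have h0 : 0 < Gt Fbar x / Gt Fbar (x+m) := div_pos (hGpos x) (hGpos (x+m))
        have h1 := one_div_le_one_div_of_le h0 hratio.le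
        rw [one_div, one_div, inv_div] at h1
        exact h1
      calc (Real.log (Gt Fbar x) - Real.log (Gt Fbar (x+m))) / (1+ε)
          = (Real.log (Gt Fbar x) - Real.log (Gt Fbar (x+m))) * (1+ε)⁻¹ :=
            div_eq_mul_inv _ _
        _ ≤ (Real.log (Gt Fbar x) - Real.log (Gt Fbar (x+m))) * (Gt Fbar (x+m) / Gt Fbar x) :=
            mul_le_mul_of_nonneg_left hcmp hld
        _ ≤ m * (Fbar x / Gt Fbar x) := bound_A hpos hanti hInt hm x
    · intro r hr
      have hq : Tendsto (fun e : ℝ => (1+e) * T) (nhdsWithin 0 (Set.Ioi 0)) (nhds T) := by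
        have hC : ContinuousAt (fun e : ℝ => (1+e) * T) 0 := by fun_prop
        have := hC.tendsto.mono_left (nhdsWithin_le_nhds (s := Set.Ioi 0))
        simpa using this
      obtain ⟨ε, hrε, hε0⟩ := ((hq.eventually_lt_const hr).and self_mem_nhdsWithin).exists
      have hε0' : (0:ℝ) < ε := hε0
      obtain ⟨Bε, hBε⟩ := eventually_atTop.1
        (hshift1.eventually_lt_const (show (1:ℝ) < 1 + ε by linarith))
      have hupper : Tendsto (fun b => m * (Fbar b / Gt Fbar b)
          + (1+ε) * (Real.log (Gt Fbar b) - Real.log (Gt Fbar (b + (N b:ℝ)*m)))) atTop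
          (nhds (0 + (1+ε) * T)) := hh0.add (hlog0.const_mul (1+ε))
      have hup2 := hupper.eventually_lt_const (show (0:ℝ) + (1+ε)*T < r by linarith)
      filter_upwards [eventually_ge_atTop Bε, hup2] with b hb1 hb2
      refine lt_of_le_of_lt ?_ hb2
      rw [Finset.sum_range_succ']
      have hg0 : m * (Fbar (b + ((0:ℕ):ℝ)*m) / Gt Fbar (b + ((0:ℕ):ℝ)*m))
          = m * (Fbar b / Gt Fbar b) := by norm_num
      have hsum : ∑ j ∈ Finset.range (N b),
          m * (Fbar (b + ((j+1:ℕ):ℝ)*m) / Gt Fbar (b + ((j+1:ℕ):ℝ)*m))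
          ≤ (1+ε) * (Real.log (Gt Fbar b) - Real.log (Gt Fbar (b + (N b:ℝ)*m))) := by
        have hstep : ∑ j ∈ Finset.range (N b),
            m * (Fbar (b + ((j+1:ℕ):ℝ)*m) / Gt Fbar (b + ((j+1:ℕ):ℝ)*m))
            ≤ ∑ j ∈ Finset.range (N b), (1+ε) *
              ((fun j : ℕ => Real.log (Gt Fbar (b + (j:ℝ)*m))) j
                - (fun j : ℕ => Real.log (Gt Fbar (b + (j:ℝ)*m))) (j + 1)) := by
          refine Finset.sum_le_sum (fun j _ => ?_)
          simp only []
          set x : ℝ := b + (j:ℝ)*m with hx_def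
          have hxB : Bε ≤ x := by
            have : 0 ≤ (j:ℝ)*m := by positivity
            rw [hx_def]; linarith
          have hratio := hBε x hxB
          have hld : 0 ≤ Real.log (Gt Fbar x) - Real.log (Gt Fbar (x+m)) := by
            have hle : Gt Fbar (x+m) ≤ Gt Fbar x :=
              G_anti hpos hanti hInt (by linarith : x ≤ x + m)
            have := Real.log_le_log (hGpos (x+m)) hle
            linarith
          have harg : b + ((j+1:ℕ):ℝ)*m = x + m := (hcastm b j).symm
          rw [harg]
          calc m * (Fbar (x+m) / Gt Fbar (x+m))
              ≤ (Real.log (Gt Fbar x) - Real.log (Gt Fbar (x+m))) * (Gt Fbar x / Gt Fbar (x+m)) :=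
                bound_B hpos hanti hInt hm x
            _ ≤ (Real.log (Gt Fbar x) - Real.log (Gt Fbar (x+m))) * (1+ε) :=
                mul_le_mul_of_nonneg_left hratio.le hld
            _ = (1+ε) * (Real.log (Gt Fbar x) - Real.log (Gt Fbar (x+m))) := mul_comm _ _
        refine hstep.trans ?_
        rw [← Finset.mul_sum,
          Finset.sum_range_sub' (fun j : ℕ => Real.log (Gt Fbar (b + (j:ℝ)*m)))]
        norm_num
      linarith
  -- final assembly
  have hfinal := hSlim.const_mul (2*θ/m)
  rw [show (2*θ/m) * T = (2*θ*(ι-1)/m) * Real.log Ls by rw [hT_def]; ring] at hfinal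
  refine hfinal.congr (fun b => ?_)
  rw [Finset.mul_sum]
  refine Finset.sum_congr rfl (fun j _ => ?_)
  have hG : Gt Fbar (b + (j:ℝ)*m) ≠ 0 := ne_of_gt (hGpos _)
  have hm' : m ≠ 0 := ne_of_gt hm
  rw [show (2*θ/m) * (m * (Fbar (b + (j:ℝ)*m) / Gt Fbar (b + (j:ℝ)*m)))
    = 2*θ*Fbar (b + (j:ℝ)*m) / Gt Fbar (b + (j:ℝ)*m) by
      field_simp]
  rfl
end

section
/- Suppose the hazard rate λ of X satisfies: λ is eventually nonincreasing, x λ(x) → ∞, and P(X > x + t/λ(x) | X > x) → e^{-t} as x → ∞ uniformly on compact sets of t ≥ 0, with the domination P(X > x + t/λ(x) | X > x) ≤ t^{-α} for some α > 1 and all t, x > b₀. Then a(x) := G(x)/F̄(x) satisfies a(x) λ(x) → 1 as x → ∞, where G(x) = ∫_x^∞ F̄(s) ds. -/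
open MeasureTheory Real Filter

/-- Under Assumptions B1, B3, B4 the mean residual life satisfies
`a(x) λ(x) → 1`, where `a(x) = G(x)/F̄(x)` and `λ` is the hazard rate. -/
theorem stmt19 (ν : Measure ℝ) [IsProbabilityMeasure ν] (b₀ α : ℝ)
    (hb₀ : 0 < b₀) (hα : 1 < α)
    (lam : ℝ → ℝ) (hlampos : ∀ x ≥ b₀, 0 < lam x)
    (hpos : ∀ x, 0 < (ν (Set.Ioi x)).toReal)
    (hhaz : ∀ x ≥ b₀,
      HasDerivAt (fun y => -Real.log ((ν (Set.Ioi y)).toReal)) (lam x) x)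
    (hB3 : AntitoneOn lam (Set.Ici b₀))
    (hB1 : Tendsto (fun x => x * lam x) atTop atTop)
    (hB4 : ∀ T > 0, TendstoUniformlyOn
        (fun x t => (ν (Set.Ioi (x + t / lam x))).toReal / (ν (Set.Ioi x)).toReal)
        (fun t => Real.exp (-t)) atTop (Set.Icc 0 T))
    (hdom : ∀ t x, b₀ < t → b₀ < x →
        (ν (Set.Ioi (x + t / lam x))).toReal / (ν (Set.Ioi x)).toReal ≤ t ^ (-α))
    (hInt : ∀ b : ℝ,
      IntegrableOn (fun s => (ν (Set.Ioi s)).toReal) (Set.Ioi b)) :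
    Tendsto (fun x =>
        ((∫ s in Set.Ioi x, (ν (Set.Ioi s)).toReal) / (ν (Set.Ioi x)).toReal)
          * lam x)
      atTop (nhds 1) := by
  set Fb : ℝ → ℝ := fun s => (ν (Set.Ioi s)).toReal with hFb
  have hFanti : Antitone Fb := by
    intro a b hab
    exact ENNReal.toReal_mono (measure_ne_top ν _)
      (measure_mono (Set.Ioi_subset_Ioi hab))
  have hFmeas : Measurable Fb := hFanti.measurable
  set G : ℝ → ℝ → ℝ := fun x t => Fb (x + t / lam x) / Fb x with hG
  -- the dominating function
  set bound : ℝ → ℝ := fun t => if t ≤ b₀ then 1 else t ^ (-α) with hbound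
  -- Step 1: the integrals converge.
  have key : Tendsto (fun x => ∫ t in Set.Ioi (0:ℝ), G x t) atTop
      (nhds (∫ t in Set.Ioi (0:ℝ), Real.exp (-t))) := by
    apply tendsto_integral_filter_of_dominated_convergence bound
    · filter_upwards [eventually_ge_atTop b₀] with x _
      exact ((hFmeas.comp ((measurable_id.div_const (lam x)).const_add x)).div_const
        (Fb x)).aestronglyMeasurable
    · filter_upwards [eventually_gt_atTop b₀] with x hx
      refine (ae_restrict_iff' measurableSet_Ioi).2 (ae_of_all _ fun t ht => ?_)
      have hlx : 0 < lam x := hlampos x hx.le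
      have hGnn : 0 ≤ G x t := div_nonneg ENNReal.toReal_nonneg ENNReal.toReal_nonneg
      rw [Real.norm_of_nonneg hGnn]
      by_cases hcase : t ≤ b₀
      · simp only [hbound, if_pos hcase]
        have hle : Fb (x + t / lam x) ≤ Fb x := by
          apply hFanti
          have : 0 ≤ t / lam x := div_nonneg (le_of_lt ht) hlx.le
          linarith
        exact (div_le_one (hpos x)).2 hle
      · simp only [hbound, if_neg hcase]
        exact hdom t x (lt_of_not_ge hcase) hx
    · -- integrability of the bound
      have h1 : IntegrableOn bound (Set.Ioc 0 b₀) := by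
        have hc : IntegrableOn (fun _ : ℝ => (1:ℝ)) (Set.Ioc 0 b₀) :=
          (integrableOn_const_iff).2 (Or.inr measure_Ioc_lt_top)
        exact hc.congr_fun (fun t ht => by simp [hbound, ht.2]) measurableSet_Ioc
      have h2 : IntegrableOn bound (Set.Ioi b₀) := by
        apply ((integrableOn_Ioi_rpow_of_lt (by linarith : -α < -1) hb₀).congr_fun
          (fun t ht => ?_) measurableSet_Ioi)
        simp only [hbound, if_neg (not_le.2 (Set.mem_Ioi.1 ht))]
      have := h1.union h2
      rwa [Set.Ioc_union_Ioi_eq_Ioi hb₀.le] at this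
    · refine (ae_restrict_iff' measurableSet_Ioi).2 (ae_of_all _ fun t ht => ?_)
      exact (hB4 t ht).tendsto_at ⟨le_of_lt ht, le_refl t⟩
  rw [integral_exp_neg_Ioi_zero] at key
  -- Step 2: eventual equality with the original expression.
  refine key.congr' ?_
  filter_upwards [eventually_ge_atTop b₀] with x hx
  have hlx : 0 < lam x := hlampos x hx
  have hshift : ∀ f : ℝ → ℝ, ∫ u in Set.Ioi (0:ℝ), f (x + u) = ∫ s in Set.Ioi x, f s := by
    intro f
    rw [← integral_indicator measurableSet_Ioi, ← integral_indicator measurableSet_Ioi,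
      ← integral_add_left_eq_self ((Set.Ioi x).indicator f) x]
    congr 1
    ext u
    simp only [Set.indicator_apply, Set.mem_Ioi, lt_add_iff_pos_right]
  have hsub : ∫ t in Set.Ioi (0:ℝ), Fb (x + t / lam x)
      = lam x * ∫ s in Set.Ioi x, Fb s := by
    have h1 : (fun t : ℝ => Fb (x + t / lam x))
        = fun t : ℝ => (fun u => Fb (x + u)) ((lam x)⁻¹ * t) := by
      funext t; rw [div_eq_inv_mul]
    rw [h1, integral_comp_mul_left_Ioi (fun u => Fb (x + u)) 0 (inv_pos.2 hlx),
      mul_zero, inv_inv, smul_eq_mul, hshift (fun s => Fb s)]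
  have : ∫ t in Set.Ioi (0:ℝ), G x t
      = (∫ t in Set.Ioi (0:ℝ), Fb (x + t / lam x)) / Fb x := by
    simp only [hG, integral_div]
  rw [this, hsub]
  field_simp
  ring
end
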